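/- arXiv:2412.12664 — 7 statements merged into one kernel-verified Lean document; each statement's English description precedes it below -/
import Mathlib

section
/- The minimum number of P₄-free bipartite graphs needed to partition the edges of K_n equals ⌈log₂ n⌉. -/
open SimpleGraph

/-- The graph `2K₂`: two disjoint edges, on vertices {0,1} and {2,3}. -/
def twoK2 : SimpleGraph (Fin 4) where
  Adj i j := i ≠ j ∧ i.val / 2 = j.val / 2
  symm := ⟨by decide⟩
  loopless := ⟨by decide⟩

/-- The path `P₃` on 3 vertices. -/
def pathP3 : SimpleGraph (Fin 3) where
  Adj i j := i.val + 1 = j.val ∨ j.val + 1 = i.val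
  symm := ⟨by decide⟩
  loopless := ⟨by decide⟩

/-- The path `P₄` on 4 vertices. -/
def pathP4 : SimpleGraph (Fin 4) where
  Adj i j := i.val + 1 = j.val ∨ j.val + 1 = i.val
  symm := ⟨by decide⟩
  loopless := ⟨by decide⟩

/-- The cycle `C₄` on 4 vertices. -/
def cycleC4 : SimpleGraph (Fin 4) where
  Adj i j := (i.val + 1) % 4 = j.val ∨ (j.val + 1) % 4 = i.val
  symm := ⟨by decide⟩
  loopless := ⟨by decide⟩

/-- The star `S₄ = K_{1,3}` on 4 vertices, with center 0. -/
def starS4 : SimpleGraph (Fin 4) where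
  Adj i j := i ≠ j ∧ (i = 0 ∨ j = 0)
  symm := ⟨by decide⟩
  loopless := ⟨by decide⟩

/-- The graph `K₂ + K₁`: an edge plus an isolated vertex. -/
def K2plusK1 : SimpleGraph (Fin 3) where
  Adj i j := (i = 0 ∧ j = 1) ∨ (i = 1 ∧ j = 0)
  symm := ⟨by decide⟩
  loopless := ⟨by decide⟩

/-- `G` avoids `H`: `H` is not an induced subgraph of `G` restricted to its
support (the vertices incident to an edge), matching the convention that
template graphs have no isolated vertices. -/
def Avoids {α β : Type} (G : SimpleGraph α) (H : SimpleGraph β) : Prop :=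
  IsEmpty (H ↪g (G.induce G.support))

/-- `P` is a partition of the edge set of the complete graph `K_n` into
bipartite graphs: every template is 2-colorable, and every edge of `K_n`
belongs to exactly one template. -/
def IsBipartitePartition (n k : ℕ) (P : Fin k → SimpleGraph (Fin n)) : Prop :=
  (∀ i, (P i).Colorable 2) ∧
    ∀ e ∈ (⊤ : SimpleGraph (Fin n)).edgeSet, ∃! i, e ∈ (P i).edgeSet

noncomputable def chiP4 (n : ℕ) : ℕ :=
  sInf {k | ∃ P : Fin k → SimpleGraph (Fin n),
    IsBipartitePartition n k P ∧ ∀ i, Avoids (P i) pathP4}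

lemma tb_ge {s i : ℕ} (h : s.testBit i = true) : 2^i ≤ s := by
  rw [Nat.testBit_eq_decide_div_mod_eq, decide_eq_true_iff] at h
  have h1 : 1 ≤ s / 2^i := by
    rcases Nat.eq_zero_or_pos (s / 2^i) with h0 | h0
    · rw [h0] at h; simp at h
    · exact h0
  have := (Nat.le_div_iff_mul_le (Nat.pow_pos (a := 2) (n := i) (by norm_num))).mp h1
  omega

lemma tb_lt {s i : ℕ} (h : ∀ j, i < j → s.testBit j = false) : s < 2^(i+1) := by
  refine Nat.lt_of_testBit (i+1) (h (i+1) (Nat.lt_succ_self i)) Nat.testBit_two_pow_self ?_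
  intro j hj
  rw [h j (by omega), Nat.testBit_two_pow_of_ne (by omega)]

lemma tb_of_interval {s i : ℕ} (h1 : 2^i ≤ s) (h2 : s < 2^(i+1)) : s.testBit i = true := by
  rw [Nat.testBit_eq_decide_div_mod_eq, decide_eq_true_iff]
  have ha : 1 ≤ s / 2^i := (Nat.le_div_iff_mul_le (Nat.pow_pos (a := 2) (n := i) (by norm_num))).mpr (by omega)
  have hb : s / 2^i < 2 := Nat.div_lt_of_lt_mul (by rw [pow_succ] at h2; omega)
  omega

lemma tb_high {s i j : ℕ} (h2 : s < 2^(i+1)) (hj : i < j) : s.testBit j = false :=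
  Nat.testBit_lt_two_pow (lt_of_lt_of_le h2 (Nat.pow_le_pow_right (by norm_num) hj))

lemma keyxor {i a b c d : ℕ}
    (hab : 2^i ≤ a^^^b ∧ a^^^b < 2^(i+1))
    (hbc : 2^i ≤ b^^^c ∧ b^^^c < 2^(i+1))
    (hcd : 2^i ≤ c^^^d ∧ c^^^d < 2^(i+1)) :
    2^i ≤ a^^^d ∧ a^^^d < 2^(i+1) := by
  have bool1 : ∀ w x y z : Bool, (w ^^ x) = true → (x ^^ y) = true → (y ^^ z) = true →
      (w ^^ z) = true := by decide
  have bool2 : ∀ w x y z : Bool, (w ^^ x) = false → (x ^^ y) = false → (y ^^ z) = false →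
      (w ^^ z) = false := by decide
  constructor
  · apply tb_ge
    have t1 := tb_of_interval hab.1 hab.2
    have t2 := tb_of_interval hbc.1 hbc.2
    have t3 := tb_of_interval hcd.1 hcd.2
    simp only [Nat.testBit_xor] at t1 t2 t3 ⊢
    exact bool1 _ _ _ _ t1 t2 t3
  · apply tb_lt
    intro j hj
    have t1 := tb_high hab.2 hj
    have t2 := tb_high hbc.2 hj
    have t3 := tb_high hcd.2 hj
    simp only [Nat.testBit_xor] at t1 t2 t3 ⊢
    exact bool2 _ _ _ _ t1 t2 t3

/-- Template `i`: edges between vertices whose highest differing bit is `i`. -/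
def tmpl (n i : ℕ) : SimpleGraph (Fin n) where
  Adj u v := u ≠ v ∧ Nat.log 2 (u.val ^^^ v.val) = i
  symm := ⟨fun u v ⟨h1, h2⟩ => ⟨h1.symm, by rwa [Nat.xor_comm]⟩⟩
  loopless := ⟨fun u h => h.1 rfl⟩

lemma tmpl_adj_interval {n i : ℕ} {u v : Fin n} (h : (tmpl n i).Adj u v) :
    2^i ≤ u.val ^^^ v.val ∧ u.val ^^^ v.val < 2^(i+1) := by
  have hne : u.val ^^^ v.val ≠ 0 := by
    rw [Ne, xor_eq_zero_iff]; exact fun he => h.1 (Fin.ext he)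
  exact ⟨h.2 ▸ Nat.pow_log_le_self 2 hne, h.2 ▸ Nat.lt_pow_succ_log_self (by norm_num) _⟩

lemma lb {n k : ℕ} (P : Fin k → SimpleGraph (Fin n)) (h : IsBipartitePartition n k P) :
    n ≤ 2^k := by
  classical
  have C : ∀ i, (P i).Coloring (Fin 2) := fun i => (h.1 i).some
  have hinj : Function.Injective (fun (v : Fin n) (i : Fin k) => C i v) := by
    intro u v huv
    by_contra hne
    obtain ⟨i, hi, -⟩ := h.2 s(u, v) (by rw [SimpleGraph.mem_edgeSet]; exact hne)
    rw [SimpleGraph.mem_edgeSet] at hi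
    exact (C i).valid hi (congrFun huv i)
  calc n = Fintype.card (Fin n) := (Fintype.card_fin n).symm
    _ ≤ Fintype.card (Fin k → Fin 2) := Fintype.card_le_of_injective _ hinj
    _ = 2^k := by simp

lemma tmpl_mem {n : ℕ} :
    Nat.clog 2 n ∈ {k | ∃ P : Fin k → SimpleGraph (Fin n),
      IsBipartitePartition n k P ∧ ∀ i, Avoids (P i) pathP4} := by
  refine ⟨fun i => tmpl n i.val, ⟨?_, ?_⟩, ?_⟩
  · -- 2-colorable
    intro i
    exact ⟨SimpleGraph.Coloring.mk (fun v => if v.val.testBit i.val then 1 else 0) (by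
      intro u v hadj heq
      have hi := tmpl_adj_interval hadj
      have t := tb_of_interval hi.1 hi.2
      rw [Nat.testBit_xor] at t
      cases hu : u.val.testBit i.val <;> cases hv : v.val.testBit i.val <;>
        simp [hu, hv] at t heq)⟩
  · -- exactly one template per edge
    intro e he
    induction e with
    | h u v =>
      rw [SimpleGraph.mem_edgeSet, SimpleGraph.top_adj] at he
      have hxne : u.val ^^^ v.val ≠ 0 := by
        rw [Ne, xor_eq_zero_iff]; exact fun h0 => he (Fin.ext h0)
      have hxlt : u.val ^^^ v.val < 2 ^ Nat.clog 2 n :=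
        Nat.xor_lt_two_pow (lt_of_lt_of_le u.isLt (Nat.le_pow_clog (by norm_num) n))
          (lt_of_lt_of_le v.isLt (Nat.le_pow_clog (by norm_num) n))
      refine ⟨⟨Nat.log 2 (u.val ^^^ v.val), Nat.log_lt_of_lt_pow hxne hxlt⟩, ?_, ?_⟩
      · simp only [SimpleGraph.mem_edgeSet]; exact ⟨he, rfl⟩
      · intro j hj
        simp only [SimpleGraph.mem_edgeSet] at hj
        exact Fin.ext hj.2.symm
  · -- P4-free
    intro i
    constructor
    intro f
    have h01 : (tmpl n i.val).Adj (f 0).val (f 1).val := f.map_rel_iff.mpr (Or.inl rfl)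
    have h12 : (tmpl n i.val).Adj (f 1).val (f 2).val := f.map_rel_iff.mpr (Or.inl rfl)
    have h23 : (tmpl n i.val).Adj (f 2).val (f 3).val := f.map_rel_iff.mpr (Or.inl rfl)
    have hk := keyxor (tmpl_adj_interval h01) (tmpl_adj_interval h12) (tmpl_adj_interval h23)
    have hne : (f 0).val.val ≠ (f 3).val.val := by
      intro hv
      exact absurd (Subtype.ext (Fin.ext hv) : (f 0) = f 3) (f.injective.ne (by decide))
    have had : (tmpl n i.val).Adj (f 0).val (f 3).val :=
      ⟨fun hv => hne (congrArg Fin.val hv), Nat.log_eq_of_pow_le_of_lt_pow hk.1 hk.2⟩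
    have : ¬ pathP4.Adj 0 3 := by
      rintro (h | h) <;> exact absurd h (by decide)
    exact this (f.map_rel_iff.mp had)

/-- `χ'_{P₄}(n) = ⌈log₂ n⌉`. -/
theorem chiP4_eq (n : ℕ) (hn : 1 ≤ n) : chiP4 n = Nat.clog 2 n := by
  refine le_antisymm (Nat.sInf_le tmpl_mem) (le_csInf ⟨_, tmpl_mem⟩ ?_)
  rintro k ⟨P, hP, -⟩
  exact (Nat.clog_le_iff_le_pow (by norm_num)).mpr (lb P hP)
end

section
/- If a Ferrers graph F contains a matching of size m, then F has at least m(m+1)/2 edges. -/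
open SimpleGraph

/-- A Ferrers graph containing a matching of size `m` has at least
`m(m+1)/2` edges. -/
theorem ferrers_matching_edges {V : Type} [Fintype V] [DecidableEq V]
    (G : SimpleGraph V) [DecidableRel G.Adj]
    (c : V → Bool) (hc : ∀ {u v : V}, G.Adj u v → c u ≠ c v)
    (hF : ∀ a b : V, c a = c b →
      G.neighborSet a ⊆ G.neighborSet b ∨ G.neighborSet b ⊆ G.neighborSet a)
    (m : ℕ) (u v : Fin m → V)
    (hadj : ∀ i, G.Adj (u i) (v i))
    (hdisj : ∀ i j, i ≠ j → u i ≠ u j ∧ v i ≠ v j ∧ u i ≠ v j ∧ v i ≠ u j) :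
    m * (m + 1) / 2 ≤ G.edgeFinset.card := by
  open Finset in
  classical
  set u' : Fin m → V := fun i => if c (u i) then u i else v i with hu'
  set v' : Fin m → V := fun i => if c (u i) then v i else u i with hv'
  have hadj' : ∀ i, G.Adj (u' i) (v' i) := by
    intro i; by_cases h : c (u i) <;> simp [hu', hv', h, hadj i, (hadj i).symm]
  have hcu' : ∀ i, c (u' i) = true := by
    intro i
    by_cases h : c (u i)
    · simp [hu', h]
    · have := hc (hadj i)
      simp only [hu', h, if_neg]
      simp only [Bool.not_eq_true] at h
      cases hv : c (v i)
      · rw [h, hv] at this; simp at this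
      · simp [h, hv]
  have hne : ∀ i j, i ≠ j → u' i ≠ u' j ∧ v' i ≠ v' j := by
    intro i j hij
    obtain ⟨h1, h2, h3, h4⟩ := hdisj i j hij
    by_cases hi : c (u i) <;> by_cases hj : c (u j) <;>
      simp [hu', hv', hi, hj, h1, h2, h3, h4, h4.symm]
  -- the pair set
  set P : Fin m → Fin m → Prop :=
    fun i j => G.neighborSet (u' j) ⊆ G.neighborSet (u' i) with hP
  set D : Fin m → Finset (Fin m) := fun i => univ.filter (fun j => P i j) with hD
  set A : Finset (Fin m × Fin m) := univ.filter (fun p => P p.1 p.2) with hA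
  have hAcard : A.card = ∑ i, (D i).card := by
    simp only [hA, hD, Finset.card_filter]
    rw [← Finset.univ_product_univ, Finset.sum_product]
  -- step 3 : m*(m+1)/2 ≤ A.card
  have key3 : m * (m + 1) / 2 ≤ A.card := by
    set B : Finset (Fin m × Fin m) := univ.filter (fun p => P p.2 p.1) with hB
    have hABcard : A.card = B.card := by
      apply Finset.card_nbij' (fun p => (p.2, p.1)) (fun p => (p.2, p.1)) <;>
        simp [hA, hB, Set.LeftInvOn, Set.RightInvOn, Set.MapsTo]
    have hunion : A ∪ B = univ := by
      apply Finset.eq_univ_of_forall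
      intro p
      simp only [Finset.mem_union, hA, hB, Finset.mem_filter, Finset.mem_univ,
        true_and]
      rcases hF (u' p.1) (u' p.2) (by rw [hcu', hcu']) with h | h
      · right; exact h
      · left; exact h
    have hdiag : (univ.image (fun i : Fin m => (i, i))) ⊆ A ∩ B := by
      intro p hp
      simp only [Finset.mem_image] at hp
      obtain ⟨i, _, rfl⟩ := hp
      simp [hA, hB, hP, subset_refl]
    have hdiagcard : (univ.image (fun i : Fin m => (i, i))).card = m := by
      rw [Finset.card_image_of_injective _ (fun a b h => (Prod.mk.injEq _ _ _ _).mp h |>.1)]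
      simp
    have h2 : m * m + m ≤ 2 * A.card := by
      have := Finset.card_union_add_card_inter A B
      have hle := Finset.card_le_card hdiag
      rw [hdiagcard] at hle
      have huc : (A ∪ B).card = m * m := by
        rw [hunion]; simp [Finset.card_univ]
      omega
    have hmm : m * (m + 1) = m * m + m := by ring
    calc m * (m + 1) / 2 ≤ 2 * A.card / 2 := by
          apply Nat.div_le_div_right; omega
      _ = A.card := by omega
  -- step 1 : (D i).card ≤ degree
  have key1 : ∀ i, (D i).card ≤ G.degree (u' i) := by
    intro i
    rw [← SimpleGraph.card_neighborFinset_eq_degree]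
    apply Finset.card_le_card_of_injOn (fun j => v' j)
    · intro j hj
      simp only [hD, Finset.mem_coe, Finset.mem_filter] at hj
      rw [Finset.mem_coe, SimpleGraph.mem_neighborFinset]
      exact hj.2 (hadj' j)
    · intro a _ b _ hab
      by_contra h
      exact (hne a b h).2 hab
  -- step 2 : sum of degrees ≤ edge count
  have key2 : ∑ i, G.degree (u' i) ≤ G.edgeFinset.card := by
    have hdisjinc : ((univ : Finset (Fin m)) : Set (Fin m)).PairwiseDisjoint
        (fun i => G.incidenceFinset (u' i)) := by
      intro i _ j _ hij
      simp only [Finset.disjoint_left]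
      intro e hei hej
      rw [SimpleGraph.mem_incidenceFinset] at hei hej
      obtain ⟨he, hi⟩ := hei
      obtain ⟨_, hj⟩ := hej
      have hadjij : G.Adj (u' i) (u' j) := by
        induction e with
        | h a b =>
          rw [Sym2.mem_iff] at hi hj
          have hab : G.Adj a b := he
          have huij := (hne i j hij).1
          rcases hi with hi | hi <;> rcases hj with hj | hj
          · exact absurd (hi.trans hj.symm) huij
          · rw [hi, hj]; exact hab
          · rw [hi, hj]; exact hab.symm
          · exact absurd (hi.trans hj.symm) huij
      exact hc hadjij (by rw [hcu', hcu'])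
    calc ∑ i, G.degree (u' i) = ∑ i, (G.incidenceFinset (u' i)).card := by
          simp [SimpleGraph.card_incidenceFinset_eq_degree]
      _ = (univ.biUnion (fun i => G.incidenceFinset (u' i))).card := by
          rw [Finset.card_biUnion hdisjinc]
      _ ≤ G.edgeFinset.card := by
          apply Finset.card_le_card
          intro e he
          rw [Finset.mem_biUnion] at he
          obtain ⟨i, _, hei⟩ := he
          rw [SimpleGraph.mem_incidenceFinset] at hei
          rw [SimpleGraph.mem_edgeFinset]
          exact hei.1
  calc m * (m + 1) / 2 ≤ A.card := key3
    _ = ∑ i, (D i).card := hAcard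
    _ ≤ ∑ i, G.degree (u' i) := Finset.sum_le_sum (fun i _ => key1 i)
    _ ≤ G.edgeFinset.card := key2
end

section
/- Fix integers k ≥ 1 and d ≥ 0. If the edge set of K_{2^k} is partitioned into bipartite graphs G₁,...,G_{k+d}, then at least k of these graphs each contain a matching of size at least 2^{k−2}/(d+1). -/
open SimpleGraph

lemma exists_maximal_matching' {n : ℕ} (G : SimpleGraph (Fin n)) :
    ∃ s : Finset (Fin n × Fin n),
      (∀ p ∈ s, G.Adj p.1 p.2) ∧
      (∀ p ∈ s, ∀ q ∈ s, p ≠ q → p.1 ≠ q.1 ∧ p.2 ≠ q.2 ∧ p.1 ≠ q.2 ∧ p.2 ≠ q.1) ∧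
      (∀ a b, G.Adj a b →
        a ∈ (s.image Prod.fst ∪ s.image Prod.snd) ∨
        b ∈ (s.image Prod.fst ∪ s.image Prod.snd)) := by
  classical
  set IsM : Finset (Fin n × Fin n) → Prop := fun s =>
    (∀ p ∈ s, G.Adj p.1 p.2) ∧
    (∀ p ∈ s, ∀ q ∈ s, p ≠ q → p.1 ≠ q.1 ∧ p.2 ≠ q.2 ∧ p.1 ≠ q.2 ∧ p.2 ≠ q.1) with hIsM
  have hne : (Finset.univ.filter IsM).Nonempty := ⟨∅, by simp [hIsM]⟩
  obtain ⟨s, hsmem, hmax⟩ := Finset.exists_max_image (Finset.univ.filter IsM) Finset.card hne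
  rw [Finset.mem_filter] at hsmem
  obtain ⟨-, hs1, hs2⟩ := hsmem
  refine ⟨s, hs1, hs2, ?_⟩
  intro a b hab
  by_contra hc
  push_neg at hc
  obtain ⟨ha, hb⟩ := hc
  have ha1 : ∀ p ∈ s, p.1 ≠ a := fun p hp h =>
    ha (Finset.mem_union_left _ (Finset.mem_image.2 ⟨p, hp, h⟩))
  have ha2 : ∀ p ∈ s, p.2 ≠ a := fun p hp h =>
    ha (Finset.mem_union_right _ (Finset.mem_image.2 ⟨p, hp, h⟩))
  have hb1 : ∀ p ∈ s, p.1 ≠ b := fun p hp h =>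
    hb (Finset.mem_union_left _ (Finset.mem_image.2 ⟨p, hp, h⟩))
  have hb2 : ∀ p ∈ s, p.2 ≠ b := fun p hp h =>
    hb (Finset.mem_union_right _ (Finset.mem_image.2 ⟨p, hp, h⟩))
  have hnotmem : (a, b) ∉ s := fun h => ha1 _ h rfl
  have hins : IsM (insert (a, b) s) := by
    constructor
    · intro p hp
      rcases Finset.mem_insert.1 hp with rfl | hp
      · exact hab
      · exact hs1 p hp
    · intro p hp q hq hpq
      rcases Finset.mem_insert.1 hp with rfl | hp <;>
        rcases Finset.mem_insert.1 hq with h' | hq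
      · exact absurd h'.symm hpq
      · exact ⟨(ha1 q hq).symm, (hb2 q hq).symm, (ha2 q hq).symm, (hb1 q hq).symm⟩
      · subst h'; exact ⟨ha1 p hp, hb2 p hp, hb1 p hp, ha2 p hp⟩
      · exact hs2 p hp q hq hpq
  have hle := hmax (insert (a, b) s) (Finset.mem_filter.2 ⟨Finset.mem_univ _, hins⟩)
  rw [Finset.card_insert_of_notMem hnotmem] at hle
  omega

lemma matching_extract' {n : ℕ} {G : SimpleGraph (Fin n)} (s : Finset (Fin n × Fin n))
    (h1 : ∀ p ∈ s, G.Adj p.1 p.2)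
    (h2 : ∀ p ∈ s, ∀ q ∈ s, p ≠ q → p.1 ≠ q.1 ∧ p.2 ≠ q.2 ∧ p.1 ≠ q.2 ∧ p.2 ≠ q.1) :
    ∃ (u v : Fin s.card → Fin n), (∀ a, G.Adj (u a) (v a)) ∧
      (∀ a b, a ≠ b → u a ≠ u b ∧ v a ≠ v b ∧ u a ≠ v b ∧ v a ≠ u b) := by
  let e := s.equivFin
  refine ⟨fun a => (e.symm a).1.1, fun a => (e.symm a).1.2, ?_, ?_⟩
  · intro a; exact h1 _ (e.symm a).2
  · intro a b hab
    have hne : ((e.symm a).1 : Fin n × Fin n) ≠ (e.symm b).1 := by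
      intro h
      exact hab (by simpa using e.symm.injective (Subtype.ext h))
    exact h2 _ (e.symm a).2 _ (e.symm b).2 hne

/-- If `K_{2^k}` is partitioned into `k + d` bipartite graphs, then at least
`k` of them contain a matching of size at least `2^{k-2}/(d+1)`. -/
theorem many_large_matchings (k d : ℕ) (hk : 1 ≤ k)
    (P : Fin (k + d) → SimpleGraph (Fin (2 ^ k)))
    (hpart : IsBipartitePartition (2 ^ k) (k + d) P) :
    ∃ S : Finset (Fin (k + d)), k ≤ S.card ∧
      ∀ i ∈ S, ∃ (M : ℕ) (u v : Fin M → Fin (2 ^ k)),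
        (∀ a, (P i).Adj (u a) (v a)) ∧
        (∀ a b, a ≠ b → u a ≠ u b ∧ v a ≠ v b ∧ u a ≠ v b ∧ v a ≠ u b) ∧
        (2 : ℝ) ^ k / (4 * (d + 1)) ≤ (M : ℝ) := by
  classical
  set r : ℝ := (2 : ℝ) ^ k / (4 * (d + 1)) with hr
  set Large : Fin (k + d) → Prop := fun i =>
    ∃ (M : ℕ) (u v : Fin M → Fin (2 ^ k)),
      (∀ a, (P i).Adj (u a) (v a)) ∧
      (∀ a b, a ≠ b → u a ≠ u b ∧ v a ≠ v b ∧ u a ≠ v b ∧ v a ≠ u b) ∧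
      r ≤ (M : ℝ) with hLarge
  refine ⟨Finset.univ.filter Large, ?_, fun i hi => (Finset.mem_filter.1 hi).2⟩
  by_contra hcard
  push_neg at hcard
  have hsplit := Finset.card_filter_add_card_filter_not
    (s := (Finset.univ : Finset (Fin (k + d)))) (p := Large)
  rw [Finset.card_univ, Fintype.card_fin] at hsplit
  have hScCard : d + 1 ≤ (Finset.univ.filter (fun i => ¬ Large i)).card := by omega
  obtain ⟨T, hTsub, hTcard⟩ := Finset.exists_subset_card_eq hScCard
  choose s hs1 hs2 hs3 using fun i => exists_maximal_matching' (P i)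
  -- small graphs have small matchings
  have hsmall : ∀ i ∈ T, ((s i).card : ℝ) < r := by
    intro i hi
    by_contra h
    push_neg at h
    obtain ⟨u, v, hu, hd⟩ := matching_extract' (s i) (hs1 i) (hs2 i)
    have hL : Large i := ⟨(s i).card, u, v, hu, hd, h⟩
    have hmem := hTsub hi
    exact (Finset.mem_filter.1 hmem).2 hL
  set C : Fin (k + d) → Finset (Fin (2 ^ k)) :=
    fun i => (s i).image Prod.fst ∪ (s i).image Prod.snd with hC
  have hCcard : ∀ i, (C i).card ≤ 2 * (s i).card := by
    intro i
    calc (C i).card ≤ ((s i).image Prod.fst).card + ((s i).image Prod.snd).card :=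
          Finset.card_union_le _ _
      _ ≤ (s i).card + (s i).card := add_le_add Finset.card_image_le Finset.card_image_le
      _ = 2 * (s i).card := by ring
  set B : Finset (Fin (2 ^ k)) := T.biUnion C with hB
  have hTne : T.Nonempty := Finset.card_pos.1 (by omega)
  have hBcard : (B.card : ℝ) < (2 : ℝ) ^ k / 2 := by
    have h12 : B.card ≤ ∑ i ∈ T, 2 * (s i).card :=
      (Finset.card_biUnion_le).trans (Finset.sum_le_sum fun i _ => hCcard i)
    have hA : (B.card : ℝ) ≤ ∑ i ∈ T, (2 : ℝ) * ((s i).card : ℝ) := by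
      calc (B.card : ℝ) ≤ ((∑ i ∈ T, 2 * (s i).card : ℕ) : ℝ) := Nat.cast_le.2 h12
        _ = ∑ i ∈ T, (2 : ℝ) * ((s i).card : ℝ) := by push_cast; rfl
    have h4 : ∑ i ∈ T, (2 : ℝ) * ((s i).card : ℝ) < ∑ i ∈ T, 2 * r := by
      apply Finset.sum_lt_sum_of_nonempty hTne
      intro i hi
      have := hsmall i hi
      linarith
    have h5 : ∑ i ∈ T, (2 : ℝ) * r = ((d : ℝ) + 1) * (2 * r) := by
      rw [Finset.sum_const, hTcard, nsmul_eq_mul]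
      push_cast; ring
    have h6 : ((d : ℝ) + 1) * (2 * r) = (2 : ℝ) ^ k / 2 := by
      rw [hr]
      have hd1 : (4 : ℝ) * ((d : ℝ) + 1) ≠ 0 := by positivity
      field_simp
      ring
    linarith
  set W : Finset (Fin (2 ^ k)) := Finset.univ \ B with hW
  have hBle : B.card ≤ 2 ^ k := by
    have := Finset.card_le_card (Finset.subset_univ B)
    rwa [Finset.card_univ, Fintype.card_fin] at this
  have hWcard : W.card = 2 ^ k - B.card := by
    rw [hW, Finset.card_sdiff_of_subset (Finset.subset_univ B), Finset.card_univ, Fintype.card_fin]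
  have hWr : (2 : ℝ) ^ k / 2 < (W.card : ℝ) := by
    have hcast : (W.card : ℝ) = (2 : ℝ) ^ k - (B.card : ℝ) := by
      rw [hWcard, Nat.cast_sub hBle]
      push_cast
      ring
    linarith
  -- colorings
  have hcol : ∀ i, (P i).Coloring (Fin 2) := fun i => (hpart.1 i).some
  set R : Finset (Fin (k + d)) := Finset.univ \ T with hRdef
  have hRcard : R.card = k - 1 := by
    rw [hRdef, Finset.card_sdiff_of_subset (Finset.subset_univ T), Finset.card_univ, Fintype.card_fin,
      hTcard]
    omega
  have ginj : Function.Injective (fun (w : ↥W) (i : ↥R) => hcol i (w : Fin (2 ^ k))) := by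
    intro w1 w2 hgw
    by_contra hne
    have hvne : (w1 : Fin (2 ^ k)) ≠ (w2 : Fin (2 ^ k)) := fun h => hne (Subtype.ext h)
    have hedge : s((w1 : Fin (2 ^ k)), (w2 : Fin (2 ^ k))) ∈
        (⊤ : SimpleGraph (Fin (2 ^ k))).edgeSet := by
      rw [SimpleGraph.mem_edgeSet]
      simpa using hvne
    obtain ⟨i, hi, -⟩ := hpart.2 _ hedge
    rw [SimpleGraph.mem_edgeSet] at hi
    by_cases hiT : i ∈ T
    · have hcov := hs3 i _ _ hi
      have hw1 : (w1 : Fin (2 ^ k)) ∉ B := (Finset.mem_sdiff.1 w1.2).2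
      have hw2 : (w2 : Fin (2 ^ k)) ∉ B := (Finset.mem_sdiff.1 w2.2).2
      rcases hcov with hm | hm
      · exact hw1 (Finset.mem_biUnion.2 ⟨i, hiT, hm⟩)
      · exact hw2 (Finset.mem_biUnion.2 ⟨i, hiT, hm⟩)
    · have hiR : i ∈ R := Finset.mem_sdiff.2 ⟨Finset.mem_univ _, hiT⟩
      have := congrFun hgw ⟨i, hiR⟩
      exact (hcol i).valid hi this
  have hWle : W.card ≤ 2 ^ (k - 1) := by
    have hle := Fintype.card_le_of_injective _ ginj
    rwa [Fintype.card_coe, Fintype.card_fun, Fintype.card_coe, Fintype.card_fin, hRcard] at hle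
  have hpow : (2 : ℝ) ^ (k - 1) = (2 : ℝ) ^ k / 2 := by
    have hkk : k - 1 + 1 = k := Nat.sub_add_cancel hk
    field_simp
    rw [← pow_succ, hkk]
  have : (W.card : ℝ) ≤ (2 : ℝ) ^ k / 2 := by
    calc (W.card : ℝ) ≤ ((2 ^ (k - 1) : ℕ) : ℝ) := Nat.cast_le.2 hWle
      _ = (2 : ℝ) ^ (k - 1) := by push_cast; rfl
      _ = (2 : ℝ) ^ k / 2 := hpow
  linarith
end

section
/- For all n ≥ 1, the edges of K_n can be partitioned into at most 2⌈√n⌉ − 2 Ferrers graphs, i.e., χ'_{2K₂}(n) ≤ 2⌈√n⌉ − 2. -/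
open SimpleGraph

noncomputable def chiFerrers (n : ℕ) : ℕ :=
  sInf {k | ∃ P : Fin k → SimpleGraph (Fin n),
    IsBipartitePartition n k P ∧ ∀ i, Avoids (P i) twoK2}

lemma twoK2_adj (a b : Fin 4) : twoK2.Adj a b ↔ a ≠ b ∧ a.val / 2 = b.val / 2 := Iff.rfl

/-- Ascent predicate. -/
def Apred (m j a b : ℕ) : Prop :=
  (a / m < j ∧ b / m = j ∧ a % m ≤ b % m) ∨ (b / m < j ∧ a / m = j ∧ b % m ≤ a % m)

/-- Descent predicate. -/
def Dpred (m j a b : ℕ) : Prop :=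
  (b % m = j ∧ a % m < j ∧ b / m ≤ a / m) ∨ (a % m = j ∧ b % m < j ∧ a / m ≤ b / m)

def AG (n m j : ℕ) : SimpleGraph (Fin n) where
  Adj u v := Apred m j u.val v.val
  symm := ⟨by intro u v h; unfold Apred at *; tauto⟩
  loopless := ⟨by
    intro u h
    rcases h with ⟨h1, h2, _⟩ | ⟨h1, h2, _⟩ <;> exact absurd h2 h1.ne⟩

def DG (n m j : ℕ) : SimpleGraph (Fin n) where
  Adj u v := Dpred m j u.val v.val
  symm := ⟨by intro u v h; unfold Dpred at *; tauto⟩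
  loopless := ⟨by
    intro u h
    rcases h with ⟨h1, h2, _⟩ | ⟨h1, h2, _⟩ <;> exact absurd h1 h2.ne⟩

lemma AG_adj (n m j : ℕ) (u v : Fin n) : (AG n m j).Adj u v ↔ Apred m j u.val v.val := Iff.rfl
lemma DG_adj (n m j : ℕ) (u v : Fin n) : (DG n m j).Adj u v ↔ Dpred m j u.val v.val := Iff.rfl

lemma AG_colorable (n m j : ℕ) : (AG n m j).Colorable 2 := by
  refine ⟨SimpleGraph.Coloring.mk (fun v => if v.val / m = j then 0 else 1) ?_⟩
  intro u v h
  rcases h with ⟨h1, h2, _⟩ | ⟨h1, h2, _⟩ <;> simp [h1.ne, h2]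

lemma DG_colorable (n m j : ℕ) : (DG n m j).Colorable 2 := by
  refine ⟨SimpleGraph.Coloring.mk (fun v => if v.val % m = j then 0 else 1) ?_⟩
  intro u v h
  rcases h with ⟨h1, h2, _⟩ | ⟨h1, h2, _⟩ <;> simp [h1, h2.ne]

lemma apred_aux (m j r0 c0 r1 c1 r2 c2 r3 c3 : ℕ)
    (h01 : (r0 < j ∧ r1 = j ∧ c0 ≤ c1) ∨ (r1 < j ∧ r0 = j ∧ c1 ≤ c0))
    (h23 : (r2 < j ∧ r3 = j ∧ c2 ≤ c3) ∨ (r3 < j ∧ r2 = j ∧ c3 ≤ c2))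
    (h02 : ¬((r0 < j ∧ r2 = j ∧ c0 ≤ c2) ∨ (r2 < j ∧ r0 = j ∧ c2 ≤ c0)))
    (h03 : ¬((r0 < j ∧ r3 = j ∧ c0 ≤ c3) ∨ (r3 < j ∧ r0 = j ∧ c3 ≤ c0)))
    (h12 : ¬((r1 < j ∧ r2 = j ∧ c1 ≤ c2) ∨ (r2 < j ∧ r1 = j ∧ c2 ≤ c1)))
    (h13 : ¬((r1 < j ∧ r3 = j ∧ c1 ≤ c3) ∨ (r3 < j ∧ r1 = j ∧ c3 ≤ c1))) :
    False := by
  rcases h01 with ⟨a1, a2, a3⟩ | ⟨a1, a2, a3⟩ <;> rcases h23 with ⟨b1, b2, b3⟩ | ⟨b1, b2, b3⟩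
  · rcases le_total c1 c3 with h | h
    · exact h03 (Or.inl ⟨a1, b2, a3.trans h⟩)
    · exact h12 (Or.inr ⟨b1, a2, b3.trans h⟩)
  · rcases le_total c1 c2 with h | h
    · exact h02 (Or.inl ⟨a1, b2, a3.trans h⟩)
    · exact h13 (Or.inr ⟨b1, a2, b3.trans h⟩)
  · rcases le_total c0 c3 with h | h
    · exact h13 (Or.inl ⟨a1, b2, a3.trans h⟩)
    · exact h02 (Or.inr ⟨b1, a2, b3.trans h⟩)
  · rcases le_total c0 c2 with h | h
    · exact h12 (Or.inl ⟨a1, b2, a3.trans h⟩)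
    · exact h03 (Or.inr ⟨b1, a2, b3.trans h⟩)

lemma dpred_aux (m j r0 c0 r1 c1 r2 c2 r3 c3 : ℕ)
    (h01 : (c1 = j ∧ c0 < j ∧ r1 ≤ r0) ∨ (c0 = j ∧ c1 < j ∧ r0 ≤ r1))
    (h23 : (c3 = j ∧ c2 < j ∧ r3 ≤ r2) ∨ (c2 = j ∧ c3 < j ∧ r2 ≤ r3))
    (h02 : ¬((c2 = j ∧ c0 < j ∧ r2 ≤ r0) ∨ (c0 = j ∧ c2 < j ∧ r0 ≤ r2)))
    (h03 : ¬((c3 = j ∧ c0 < j ∧ r3 ≤ r0) ∨ (c0 = j ∧ c3 < j ∧ r0 ≤ r3)))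
    (h12 : ¬((c2 = j ∧ c1 < j ∧ r2 ≤ r1) ∨ (c1 = j ∧ c2 < j ∧ r1 ≤ r2)))
    (h13 : ¬((c3 = j ∧ c1 < j ∧ r3 ≤ r1) ∨ (c1 = j ∧ c3 < j ∧ r1 ≤ r3))) :
    False := by
  rcases h01 with ⟨a1, a2, a3⟩ | ⟨a1, a2, a3⟩ <;> rcases h23 with ⟨b1, b2, b3⟩ | ⟨b1, b2, b3⟩
  · rcases le_total r1 r3 with h | h
    · exact h12 (Or.inr ⟨a1, b2, h.trans b3⟩)
    · exact h03 (Or.inl ⟨b1, a2, h.trans a3⟩)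
  · rcases le_total r1 r2 with h | h
    · exact h13 (Or.inr ⟨a1, b2, h.trans b3⟩)
    · exact h02 (Or.inl ⟨b1, a2, h.trans a3⟩)
  · rcases le_total r0 r3 with h | h
    · exact h02 (Or.inr ⟨a1, b2, h.trans b3⟩)
    · exact h13 (Or.inl ⟨b1, a2, h.trans a3⟩)
  · rcases le_total r0 r2 with h | h
    · exact h03 (Or.inr ⟨a1, b2, h.trans b3⟩)
    · exact h12 (Or.inl ⟨b1, a2, h.trans a3⟩)

lemma AG_avoids (n m j : ℕ) : Avoids (AG n m j) twoK2 := by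
  constructor
  intro f
  have key : ∀ a b : Fin 4, (a ≠ b ∧ a.val / 2 = b.val / 2) ↔
      Apred m j ((f a) : Fin n).val ((f b) : Fin n).val := by
    intro a b
    rw [← twoK2_adj, ← f.map_adj_iff]
    exact Iff.rfl
  have h01 := (key 0 1).1 (by decide)
  have h23 := (key 2 3).1 (by decide)
  have h02 : ¬ _ := fun (h : Apred m j ((f 0) : Fin n).val ((f 2) : Fin n).val) => absurd ((key 0 2).2 h).2 (by decide : ¬((0:Fin 4).val / 2 = (2:Fin 4).val / 2))
  have h03 : ¬ _ := fun (h : Apred m j ((f 0) : Fin n).val ((f 3) : Fin n).val) => absurd ((key 0 3).2 h).2 (by decide : ¬((0:Fin 4).val / 2 = (3:Fin 4).val / 2))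
  have h12 : ¬ _ := fun (h : Apred m j ((f 1) : Fin n).val ((f 2) : Fin n).val) => absurd ((key 1 2).2 h).2 (by decide : ¬((1:Fin 4).val / 2 = (2:Fin 4).val / 2))
  have h13 : ¬ _ := fun (h : Apred m j ((f 1) : Fin n).val ((f 3) : Fin n).val) => absurd ((key 1 3).2 h).2 (by decide : ¬((1:Fin 4).val / 2 = (3:Fin 4).val / 2))
  unfold Apred at h01 h23 h02 h03 h12 h13
  exact apred_aux m j _ _ _ _ _ _ _ _ h01 h23 h02 h03 h12 h13

lemma DG_avoids (n m j : ℕ) : Avoids (DG n m j) twoK2 := by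
  constructor
  intro f
  have key : ∀ a b : Fin 4, (a ≠ b ∧ a.val / 2 = b.val / 2) ↔
      Dpred m j ((f a) : Fin n).val ((f b) : Fin n).val := by
    intro a b
    rw [← twoK2_adj, ← f.map_adj_iff]
    exact Iff.rfl
  have h01 := (key 0 1).1 (by decide)
  have h23 := (key 2 3).1 (by decide)
  have h02 : ¬ _ := fun (h : Dpred m j ((f 0) : Fin n).val ((f 2) : Fin n).val) => absurd ((key 0 2).2 h).2 (by decide : ¬((0:Fin 4).val / 2 = (2:Fin 4).val / 2))
  have h03 : ¬ _ := fun (h : Dpred m j ((f 0) : Fin n).val ((f 3) : Fin n).val) => absurd ((key 0 3).2 h).2 (by decide : ¬((0:Fin 4).val / 2 = (3:Fin 4).val / 2))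
  have h12 : ¬ _ := fun (h : Dpred m j ((f 1) : Fin n).val ((f 2) : Fin n).val) => absurd ((key 1 2).2 h).2 (by decide : ¬((1:Fin 4).val / 2 = (2:Fin 4).val / 2))
  have h13 : ¬ _ := fun (h : Dpred m j ((f 1) : Fin n).val ((f 3) : Fin n).val) => absurd ((key 1 3).2 h).2 (by decide : ¬((1:Fin 4).val / 2 = (3:Fin 4).val / 2))
  unfold Dpred at h01 h23 h02 h03 h12 h13
  exact dpred_aux m j _ _ _ _ _ _ _ _ h01 h23 h02 h03 h12 h13

def Pfam (n m : ℕ) : Fin (2 * m - 2) → SimpleGraph (Fin n) :=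
  fun i => if i.val < m - 1 then AG n m (i.val + 1) else DG n m (i.val - (m - 1) + 1)

lemma Pfam_adj (n m : ℕ) (i : Fin (2 * m - 2)) (u v : Fin n) :
    (Pfam n m i).Adj u v ↔
      (i.val < m - 1 ∧ Apred m (i.val + 1) u.val v.val) ∨
      (¬ i.val < m - 1 ∧ Dpred m (i.val - (m - 1) + 1) u.val v.val) := by
  unfold Pfam
  split_ifs with h <;> simp [AG_adj, DG_adj, h]

lemma key_nat (m ra ca rb cb : ℕ) (hra : ra < m) (hrb : rb < m) (hca : ca < m) (hcb : cb < m)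
    (hlex : ra < rb ∨ (ra = rb ∧ ca < cb)) :
    ∃! i : Fin (2 * m - 2),
      (i.val < m - 1 ∧
        ((ra < i.val + 1 ∧ rb = i.val + 1 ∧ ca ≤ cb) ∨
          (rb < i.val + 1 ∧ ra = i.val + 1 ∧ cb ≤ ca))) ∨
      (¬ i.val < m - 1 ∧
        ((cb = i.val - (m - 1) + 1 ∧ ca < i.val - (m - 1) + 1 ∧ rb ≤ ra) ∨
          (ca = i.val - (m - 1) + 1 ∧ cb < i.val - (m - 1) + 1 ∧ ra ≤ rb))) := by
  rcases hlex with hr | ⟨hr, hc⟩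
  · rcases le_or_gt ca cb with hc | hc
    · refine ⟨⟨rb - 1, by omega⟩, ?_, fun i hi => Fin.ext ?_⟩ <;>
        simp only [Fin.val_mk] at * <;> omega
    · refine ⟨⟨m - 2 + ca, by omega⟩, ?_, fun i hi => Fin.ext ?_⟩ <;>
        simp only [Fin.val_mk] at * <;> omega
  · refine ⟨⟨m - 2 + cb, by omega⟩, ?_, fun i hi => Fin.ext ?_⟩ <;>
      simp only [Fin.val_mk] at * <;> omega

lemma key_lt (n m : ℕ) (hm : 0 < m) (hnm : n ≤ m * m) (u v : Fin n)
    (hlex : u.val / m < v.val / m ∨ (u.val / m = v.val / m ∧ u.val % m < v.val % m)) :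
    ∃! i : Fin (2 * m - 2), (Pfam n m i).Adj u v := by
  have hru : u.val / m < m := Nat.div_lt_iff_lt_mul hm |>.2 (lt_of_lt_of_le u.2 hnm)
  have hrv : v.val / m < m := Nat.div_lt_iff_lt_mul hm |>.2 (lt_of_lt_of_le v.2 hnm)
  have hcu : u.val % m < m := Nat.mod_lt _ hm
  have hcv : v.val % m < m := Nat.mod_lt _ hm
  have H := key_nat m (u.val / m) (u.val % m) (v.val / m) (v.val % m) hru hrv hcu hcv hlex
  simpa only [Pfam_adj, Apred, Dpred] using H

/-- `χ'_{2K₂}(n) ≤ 2⌈√n⌉ - 2`. -/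
theorem chiFerrers_upper (n : ℕ) (hn : 1 ≤ n) :
    chiFerrers n ≤ 2 * ⌈Real.sqrt n⌉₊ - 2 := by
  set m := ⌈Real.sqrt n⌉₊ with hm_def
  have hm : 0 < m := by
    rw [hm_def]
    have : (0:ℝ) < Real.sqrt n := Real.sqrt_pos.2 (by exact_mod_cast hn)
    exact Nat.ceil_pos.2 this
  have hnm : n ≤ m * m := by
    have h1 : (n : ℝ) ≤ (m : ℝ) * m := by
      have hs : Real.sqrt n ≤ (m : ℝ) := Nat.le_ceil _
      have := Real.sq_sqrt (by positivity : (0:ℝ) ≤ (n:ℝ))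
      nlinarith [Real.sqrt_nonneg (n:ℝ)]
    exact_mod_cast h1
  apply Nat.sInf_le
  refine ⟨Pfam n m, ⟨?_, ?_⟩, ?_⟩
  · intro i
    unfold Pfam
    split_ifs
    · exact AG_colorable n m _
    · exact DG_colorable n m _
  · intro e he
    induction e using Sym2.ind with
    | _ u v =>
      rw [mem_edgeSet, top_adj] at he
      simp only [mem_edgeSet]
      have hvals : u.val ≠ v.val := fun h => he (Fin.ext h)
      rcases lt_trichotomy (u.val / m) (v.val / m) with h | h | h
      · exact key_lt n m hm hnm u v (Or.inl h)
      · rcases lt_trichotomy (u.val % m) (v.val % m) with h2 | h2 | h2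
        · exact key_lt n m hm hnm u v (Or.inr ⟨h, h2⟩)
        · refine absurd ?_ hvals
          have h3 : m * (u.val / m) = m * (v.val / m) := by rw [h]
          have h4 := Nat.div_add_mod u.val m
          have h5 := Nat.div_add_mod v.val m
          omega
        · obtain ⟨i, hi, hu⟩ := key_lt n m hm hnm v u (Or.inr ⟨h.symm, h2⟩)
          exact ⟨i, hi.symm, fun j hj => hu j hj.symm⟩
      · obtain ⟨i, hi, hu⟩ := key_lt n m hm hnm v u (Or.inl h)
        exact ⟨i, hi.symm, fun j hj => hu j hj.symm⟩
  · intro i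
    unfold Pfam
    split_ifs
    · exact AG_avoids n m _
    · exact DG_avoids n m _
end

section
/- For all n ≥ 2, every partition of the edges of K_n into Ferrers graphs uses more than ⌊log₂ n⌋ + (1/4)√⌊log₂ n⌋ − 1 parts. -/
open SimpleGraph

section AuxFerrers
variable {n : ℕ}

def IsMatchIn (G : SimpleGraph (Fin n)) (S : Finset (Fin n)) (M : Finset (Fin n × Fin n)) : Prop :=
  (∀ p ∈ M, G.Adj p.1 p.2 ∧ p.1 ∈ S ∧ p.2 ∈ S) ∧
  ∀ p ∈ M, ∀ q ∈ M, p ≠ q → p.1 ≠ q.1 ∧ p.1 ≠ q.2 ∧ p.2 ≠ q.1 ∧ p.2 ≠ q.2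

lemma IsMatchIn.subset {G : SimpleGraph (Fin n)} {S : Finset (Fin n)}
    {M N : Finset (Fin n × Fin n)} (h : IsMatchIn G S M) (hNM : N ⊆ M) :
    IsMatchIn G S N :=
  ⟨fun p hp => h.1 p (hNM hp), fun p hp q hq => h.2 p (hNM hp) q (hNM hq)⟩


private lemma cross_edge {n : ℕ} {G : SimpleGraph (Fin n)} (hA : Avoids G twoK2)
    {a b x y : Fin n} (hab : G.Adj a b) (hxy : G.Adj x y)
    (h1 : a ≠ x) (h2 : a ≠ y) (h3 : b ≠ x) (h4 : b ≠ y) :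
    G.Adj a x ∨ G.Adj a y ∨ G.Adj b x ∨ G.Adj b y := by
  by_contra hc
  push_neg at hc
  obtain ⟨n1, n2, n3, n4⟩ := hc
  have hane : a ≠ b := hab.ne
  have hxne : x ≠ y := hxy.ne
  refine hA.false ?_
  refine ⟨⟨![⟨a, b, hab⟩, ⟨b, a, hab.symm⟩, ⟨x, y, hxy⟩, ⟨y, x, hxy.symm⟩], ?_⟩, ?_⟩
  · intro i j hij
    fin_cases i <;> fin_cases j <;> simp_all [Subtype.ext_iff] <;> simp_all [eq_comm]
  · intro i j
    fin_cases i <;> fin_cases j <;>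
      simp_all [twoK2, comap_adj, Function.Embedding.coeFn_mk] <;>
      first
        | exact fun h => n1 h
        | exact fun h => n2 h
        | exact fun h => n3 h
        | exact fun h => n4 h
        | exact fun h => n1 h.symm
        | exact fun h => n2 h.symm
        | exact fun h => n3 h.symm
        | exact fun h => n4 h.symm
        | exact hab
        | exact hab.symm
        | exact hxy
        | exact hxy.symm
        | decide
        | (refine iff_of_true ?_ (by decide); first | exact hab | exact hab.symm | exact hxy | exact hxy.symm)
        | (refine iff_of_false ?_ (by decide); intro h; first | exact n1 h | exact n1 h.symm | exact n2 h | exact n2 h.symm | exact n3 h | exact n3 h.symm | exact n4 h | exact n4 h.symm)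


private lemma matching_edge_bound {G : SimpleGraph (Fin n)} (hA : Avoids G twoK2) {S : Finset (Fin n)}
    {E : Finset (Sym2 (Fin n))}
    (hE : ∀ u v : Fin n, G.Adj u v → u ∈ S → v ∈ S → s(u,v) ∈ E)
    {M : Finset (Fin n × Fin n)} (hM : IsMatchIn G S M) :
    M.card * (M.card + 1) / 2 ≤ E.card := by
  classical
  suffices H : ∀ (M : Finset (Fin n × Fin n)), IsMatchIn G S M →
      M.card * (M.card + 1) / 2 ≤ (E.filter (fun e => ∀ z ∈ e,
        z ∈ M.biUnion (fun p => ({p.1, p.2} : Finset (Fin n))))).card by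
    exact le_trans (H M hM) (Finset.card_le_card (Finset.filter_subset _ _))
  clear hM M
  intro M
  induction M using Finset.induction_on with
  | empty => intro _; simp
  | @insert p M₀ hp ih =>
    intro hMM
    have hM₀ : IsMatchIn G S M₀ := hMM.subset (Finset.subset_insert _ _)
    set V₀ : Finset (Fin n) := M₀.biUnion (fun q => ({q.1, q.2} : Finset (Fin n))) with hV₀def
    set V : Finset (Fin n) :=
      (insert p M₀).biUnion (fun q => ({q.1, q.2} : Finset (Fin n))) with hVdef
    obtain ⟨hpadj, hpS1, hpS2⟩ := hMM.1 p (Finset.mem_insert_self _ _)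
    have hdis : ∀ q ∈ M₀, p.1 ≠ q.1 ∧ p.1 ≠ q.2 ∧ p.2 ≠ q.1 ∧ p.2 ≠ q.2 := by
      intro q hq
      exact hMM.2 p (Finset.mem_insert_self _ _) q (Finset.mem_insert_of_mem hq)
        (fun h => hp (h ▸ hq))
    have hpV₀1 : p.1 ∉ V₀ := by
      simp only [hV₀def, Finset.mem_biUnion, Finset.mem_insert, Finset.mem_singleton]
      rintro ⟨q, hq, h | h⟩
      · exact (hdis q hq).1 h
      · exact (hdis q hq).2.1 h
    have hpV₀2 : p.2 ∉ V₀ := by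
      simp only [hV₀def, Finset.mem_biUnion, Finset.mem_insert, Finset.mem_singleton]
      rintro ⟨q, hq, h | h⟩
      · exact (hdis q hq).2.2.1 h
      · exact (hdis q hq).2.2.2 h
    set g : (Fin n × Fin n) → Sym2 (Fin n) := fun q =>
      if G.Adj p.1 q.1 then s(p.1,q.1) else if G.Adj p.1 q.2 then s(p.1,q.2)
      else if G.Adj p.2 q.1 then s(p.2,q.1) else s(p.2,q.2) with hgdef
    have hg : ∀ q ∈ M₀, ∃ u v, g q = s(u,v) ∧ G.Adj u v ∧
        (u = p.1 ∨ u = p.2) ∧ (v = q.1 ∨ v = q.2) := by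
      intro q hq
      obtain ⟨d1, d2, d3, d4⟩ := hdis q hq
      have hqadj : G.Adj q.1 q.2 := (hM₀.1 q hq).1
      simp only [hgdef]
      split_ifs with h1 h2 h3
      · exact ⟨p.1, q.1, rfl, h1, Or.inl rfl, Or.inl rfl⟩
      · exact ⟨p.1, q.2, rfl, h2, Or.inl rfl, Or.inr rfl⟩
      · exact ⟨p.2, q.1, rfl, h3, Or.inr rfl, Or.inl rfl⟩
      · refine ⟨p.2, q.2, rfl, ?_, Or.inr rfl, Or.inr rfl⟩
        rcases cross_edge hA hpadj hqadj d1 d2 d3 d4 with h | h | h | h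
        · exact absurd h h1
        · exact absurd h h2
        · exact absurd h h3
        · exact h
    clear_value g
    clear hgdef
    set N : Finset (Sym2 (Fin n)) := insert s(p.1,p.2) (M₀.image g) with hNdef
    have hpV1 : p.1 ∈ V := by
      simp only [hVdef, Finset.mem_biUnion]
      exact ⟨p, Finset.mem_insert_self _ _, by simp⟩
    have hpV2 : p.2 ∈ V := by
      simp only [hVdef, Finset.mem_biUnion]
      exact ⟨p, Finset.mem_insert_self _ _, by simp⟩
    have hqV : ∀ q ∈ M₀, q.1 ∈ V ∧ q.2 ∈ V := by
      intro q hq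
      constructor <;>
      · simp only [hVdef, Finset.mem_biUnion]
        exact ⟨q, Finset.mem_insert_of_mem hq, by simp⟩
    have hNsub : N ⊆ E.filter (fun e => ∀ z ∈ e, z ∈ V) := by
      intro e he
      rw [hNdef, Finset.mem_insert] at he
      rcases he with rfl | he
      · rw [Finset.mem_filter]
        refine ⟨hE _ _ hpadj hpS1 hpS2, ?_⟩
        intro z hz
        rcases Sym2.mem_iff.mp hz with rfl | rfl
        · exact hpV1
        · exact hpV2
      · obtain ⟨q, hq, rfl⟩ := Finset.mem_image.mp he
        obtain ⟨u, v, hguv, huv, hu, hv⟩ := hg q hq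
        rw [hguv, Finset.mem_filter]
        have huS : u ∈ S := by rcases hu with rfl | rfl <;> assumption
        have hvS : v ∈ S := by
          rcases hv with rfl | rfl
          · exact (hM₀.1 q hq).2.1
          · exact (hM₀.1 q hq).2.2
        refine ⟨hE _ _ huv huS hvS, ?_⟩
        intro z hz
        rcases Sym2.mem_iff.mp hz with rfl | rfl
        · rcases hu with rfl | rfl
          · exact hpV1
          · exact hpV2
        · rcases hv with rfl | rfl
          · exact (hqV q hq).1
          · exact (hqV q hq).2
    have hNdisj : Disjoint (E.filter (fun e => ∀ z ∈ e, z ∈ V₀)) N := by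
      rw [Finset.disjoint_right]
      intro e heN heO
      rw [Finset.mem_filter] at heO
      have : p.1 ∈ V₀ ∨ p.2 ∈ V₀ := by
        rw [hNdef, Finset.mem_insert] at heN
        rcases heN with rfl | heN
        · exact Or.inl (heO.2 p.1 (Sym2.mem_mk_left _ _))
        · obtain ⟨q, hq, rfl⟩ := Finset.mem_image.mp heN
          obtain ⟨u, v, hguv, _, hu, _⟩ := hg q hq
          have : u ∈ V₀ := heO.2 u (by rw [hguv]; exact Sym2.mem_mk_left _ _)
          rcases hu with rfl | rfl
          · exact Or.inl this
          · exact Or.inr this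
      rcases this with h | h
      · exact hpV₀1 h
      · exact hpV₀2 h
    have hNcard : N.card = M₀.card + 1 := by
      rw [hNdef]
      have hnotmem : s(p.1,p.2) ∉ M₀.image g := by
        intro hmem
        obtain ⟨q, hq, hgq⟩ := Finset.mem_image.mp hmem
        obtain ⟨u, v, hguv, _, _, hv⟩ := hg q hq
        have hvmem : v ∈ s(p.1, p.2) := by
          rw [← hgq, hguv]; exact Sym2.mem_mk_right _ _
        obtain ⟨d1, d2, d3, d4⟩ := hdis q hq
        rcases hv with rfl | rfl <;> rcases Sym2.mem_iff.mp hvmem with h | h <;>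
          first | exact d1 h.symm | exact d2 h.symm | exact d3 h.symm | exact d4 h.symm
      rw [Finset.card_insert_of_notMem hnotmem, Finset.card_image_of_injOn]
      intro q hq r hr hgqr
      by_contra hqr
      obtain ⟨u, v, hguv, _, hu, hv⟩ := hg q hq
      obtain ⟨u', v', hguv', _, hu', hv'⟩ := hg r hr
      rw [hguv, hguv'] at hgqr
      have hdisqr := hM₀.2 q hq r hr hqr
      have hdisr := hdis r hr
      rw [Sym2.eq_iff] at hgqr
      rcases hgqr with ⟨h1, h2⟩ | ⟨h1, h2⟩
      · rcases hv with rfl | rfl <;> rcases hv' with hw | hw <;>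
          rw [hw] at h2 <;>
          first | exact hdisqr.1 h2 | exact hdisqr.2.1 h2
                | exact hdisqr.2.2.1 h2 | exact hdisqr.2.2.2 h2
      · rcases hu with rfl | rfl <;> rcases hv' with hw | hw <;>
          rw [hw] at h1 <;>
          first | exact hdisr.1 h1 | exact hdisr.2.1 h1
                | exact hdisr.2.2.1 h1 | exact hdisr.2.2.2 h1
    have hcard : (E.filter (fun e => ∀ z ∈ e, z ∈ V₀)).card + (M₀.card + 1) ≤
        (E.filter (fun e => ∀ z ∈ e, z ∈ V)).card := by
      have hsub : (E.filter (fun e => ∀ z ∈ e, z ∈ V₀)) ∪ N ⊆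
          E.filter (fun e => ∀ z ∈ e, z ∈ V) := by
        apply Finset.union_subset _ hNsub
        have hsubV : V₀ ⊆ V := by
          apply Finset.biUnion_subset_biUnion_of_subset_left
          exact Finset.subset_insert _ _
        intro e he
        rw [Finset.mem_filter] at he ⊢
        exact ⟨he.1, fun z hz => hsubV (he.2 z hz)⟩
      calc (E.filter (fun e => ∀ z ∈ e, z ∈ V₀)).card + (M₀.card + 1)
          = ((E.filter (fun e => ∀ z ∈ e, z ∈ V₀)) ∪ N).card := by
            rw [Finset.card_union_of_disjoint hNdisj, hNcard]
        _ ≤ _ := Finset.card_le_card hsub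
    have ihc := ih hM₀
    rw [Finset.card_insert_of_notMem hp]
    have heq : (M₀.card + 1) * (M₀.card + 1 + 1) = M₀.card * (M₀.card + 1) + 2 * (M₀.card + 1) := by ring
    have hev : 2 ∣ M₀.card * (M₀.card + 1) := (Nat.even_mul_succ_self M₀.card).two_dvd
    omega
end AuxFerrers

/-- Every partition of `E(K_n)` into Ferrers graphs (2K₂-free bipartite
graphs) uses more than `⌊log₂ n⌋ + (1/4)√⌊log₂ n⌋ - 1` parts. -/
theorem ferrers_partition_lower (n : ℕ) (hn : 2 ≤ n) (k : ℕ)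
    (P : Fin k → SimpleGraph (Fin n))
    (hpart : IsBipartitePartition n k P)
    (hfree : ∀ i, Avoids (P i) twoK2) :
    (Nat.log 2 n : ℝ) + Real.sqrt (Nat.log 2 n) / 4 - 1 < (k : ℝ) := by
  classical
  set L := Nat.log 2 n with hLdef
  have hcol : ∀ i, ∃ c : Fin n → Fin 2, ∀ u v, (P i).Adj u v → c u ≠ c v := by
    intro i
    obtain ⟨C⟩ := hpart.1 i
    exact ⟨C, fun u v h => C.valid h⟩
  choose c hc using hcol
  have huniq : ∀ u v : Fin n, u ≠ v → ∃! i, s(u,v) ∈ (P i).edgeSet := by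
    intro u v huv
    exact hpart.2 _ (by rw [mem_edgeSet, top_adj]; exact huv)
  have hLn : 2 ^ L ≤ n := Nat.pow_log_le_self 2 (by omega)
  set S : Finset (Fin n) := Finset.univ.map (Fin.castLEEmb hLn) with hSdef
  have hScard : S.card = 2 ^ L := by
    rw [hSdef, Finset.card_map, Finset.card_univ, Fintype.card_fin]
  have hL1 : 1 ≤ L := by
    rw [hLdef]
    exact Nat.le_log_of_pow_le (by norm_num) (by simpa using hn)
  -- k ≥ L
  have hkL : L ≤ k := by
    have hinj : Function.Injective (fun v : Fin n => (fun j : Fin k => c j v)) := by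
      intro u v huv
      by_contra hne
      obtain ⟨i, hi, -⟩ := huniq u v hne
      rw [mem_edgeSet] at hi
      exact hc i u v hi (congrFun huv i)
    have h1 : n ≤ 2 ^ k := by
      have := Fintype.card_le_of_injective _ hinj
      simpa using this
    have : (2:ℕ) ^ L ≤ 2 ^ k := le_trans hLn h1
    exact (Nat.pow_le_pow_iff_right (by norm_num)).mp this
  set d := k - L with hddef
  have hkd : k = L + d := by omega
  -- main combinatorial claim
  have hmain : L < 16 * (d+1)^2 := by
    by_contra hcon
    push_neg at hcon
    have hL16 : 16 ≤ L := by nlinarith [sq_nonneg d]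
    have hw2pos : 1 ≤ 2 ^ (L-2) := Nat.one_le_two_pow
    set t : ℕ := (2^(L-2) - 1) / (d+1) + 1 with htdef
    have ht1 : 1 ≤ t := by rw [htdef]; exact Nat.le_add_left 1 _
    have htub : (t-1) * (d+1) ≤ 2^(L-2) - 1 := by
      rw [htdef]
      simpa using Nat.div_mul_le_self (2^(L-2) - 1) (d+1)
    have htlb : 2^(L-2) ≤ t * (d+1) := by
      have hmod := Nat.div_add_mod (2^(L-2) - 1) (d+1)
      have hmlt : (2^(L-2) - 1) % (d+1) < d+1 := Nat.mod_lt _ (by omega)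
      have he1 : t*(d+1) = (d+1) * ((2^(L-2) - 1) / (d+1)) + (d+1) := by
        rw [htdef]; ring
      omega
    -- max matchings
    have hex : ∀ i : Fin k, ∃ M, IsMatchIn (P i) S M ∧
        ∀ M', IsMatchIn (P i) S M' → M'.card ≤ M.card := by
      intro i
      obtain ⟨M, hM, hmax⟩ := Finset.exists_max_image
        (Finset.univ.filter (fun M => IsMatchIn (P i) S M)) Finset.card
        ⟨∅, by simp [IsMatchIn]⟩
      rw [Finset.mem_filter] at hM
      exact ⟨M, hM.2, fun M' hM' => hmax M' (Finset.mem_filter.mpr ⟨Finset.mem_univ _, hM'⟩)⟩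
    choose Mm hMm hMmax using hex
    set Gd : Finset (Fin k) := Finset.univ.filter (fun i => t ≤ (Mm i).card) with hGdef
    have hpw1 : 2 ^ (L-1) * 2 = 2 ^ L := by
      rw [← pow_succ, Nat.sub_add_cancel hL1]
    have hpw2 : 2 ^ (L-2) * 2 = 2 ^ (L-1) := by
      rw [← pow_succ]
      congr 1
      omega
    -- at least L good parts
    have hGL : L ≤ Gd.card := by
      by_contra hGL
      push_neg at hGL
      have hBc : d + 1 ≤ Gdᶜ.card := by
        rw [Finset.card_compl, Fintype.card_fin]
        omega
      obtain ⟨B, hBsub, hBcard⟩ := Finset.exists_subset_card_eq (s := Gdᶜ) hBc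
      set C : Finset (Fin n) := B.biUnion (fun i => (Mm i).biUnion
        (fun p => ({p.1, p.2} : Finset (Fin n)))) with hCdef
      have hMmB : ∀ i ∈ B, (Mm i).card ≤ t - 1 := by
        intro i hi
        have : i ∉ Gd := Finset.mem_compl.mp (hBsub hi)
        rw [hGdef, Finset.mem_filter] at this
        push_neg at this
        have := this (Finset.mem_univ _)
        omega
      have hCcard : C.card ≤ (d+1) * (2 * (t-1)) := by
        refine le_trans Finset.card_biUnion_le ?_
        calc ∑ i ∈ B, ((Mm i).biUnion (fun p => ({p.1, p.2} : Finset (Fin n)))).card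
            ≤ ∑ i ∈ B, (2 * (t-1)) := by
              refine Finset.sum_le_sum ?_
              intro i hi
              refine le_trans Finset.card_biUnion_le ?_
              calc ∑ p ∈ Mm i, ({p.1, p.2} : Finset (Fin n)).card
                  ≤ ∑ p ∈ Mm i, 2 := by
                    refine Finset.sum_le_sum ?_
                    intro p _
                    exact Finset.card_insert_le _ _ |>.trans (by simp)
                _ = (Mm i).card * 2 := by rw [Finset.sum_const, smul_eq_mul]
                _ ≤ (t-1) * 2 := by
                    exact Nat.mul_le_mul_right _ (hMmB i hi)
                _ = 2 * (t-1) := by ring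
          _ = (d+1) * (2 * (t-1)) := by rw [Finset.sum_const, smul_eq_mul, hBcard]
      set S' : Finset (Fin n) := S \ C with hS'def
      have hS'lb : 2^(L-1) < S'.card := by
        have h1 : S.card - C.card ≤ S'.card := Finset.le_card_sdiff _ _
        have h2 : (t-1)*(d+1) ≤ 2^(L-2) - 1 := htub
        have h3 : (d+1) * (2*(t-1)) = 2 * ((t-1)*(d+1)) := by ring
        omega
      -- injection
      have hnotB : ∀ u v : Fin n, u ∈ S' → v ∈ S' → ∀ i : Fin k,
          (P i).Adj u v → i ∉ B := by
        intro u v hu hv i hadj hiB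
        have huS : u ∈ S := (Finset.mem_sdiff.mp hu).1
        have hvS : v ∈ S := (Finset.mem_sdiff.mp hv).1
        have huC : u ∉ C := (Finset.mem_sdiff.mp hu).2
        have hvC : v ∉ C := (Finset.mem_sdiff.mp hv).2
        have hmemC : ∀ w : Fin n, (∃ q ∈ Mm i, w = q.1 ∨ w = q.2) → w ∈ C := by
          rintro w ⟨q, hq, hw⟩
          rw [hCdef]
          refine Finset.mem_biUnion.mpr ⟨i, hiB, Finset.mem_biUnion.mpr ⟨q, hq, ?_⟩⟩
          rcases hw with rfl | rfl <;> simp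
        have hnm : (u, v) ∉ Mm i := by
          intro hmem
          exact huC (hmemC u ⟨(u,v), hmem, Or.inl rfl⟩)
        have hM' : IsMatchIn (P i) S (insert (u,v) (Mm i)) := by
          constructor
          · intro p hp
            rcases Finset.mem_insert.mp hp with rfl | hp
            · exact ⟨hadj, huS, hvS⟩
            · exact (hMm i).1 p hp
          · intro p hp q hq hpq
            rcases Finset.mem_insert.mp hp with rfl | hp <;>
              rcases Finset.mem_insert.mp hq with rfl | hq
            · exact absurd rfl hpq
            · exact ⟨fun h => huC (hmemC _ ⟨q, hq, Or.inl h⟩),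
                fun h => huC (hmemC _ ⟨q, hq, Or.inr h⟩),
                fun h => hvC (hmemC _ ⟨q, hq, Or.inl h⟩),
                fun h => hvC (hmemC _ ⟨q, hq, Or.inr h⟩)⟩
            · exact ⟨fun h => huC (hmemC _ ⟨p, hp, Or.inl h.symm⟩),
                fun h => hvC (hmemC _ ⟨p, hp, Or.inl h.symm⟩),
                fun h => huC (hmemC _ ⟨p, hp, Or.inr h.symm⟩),
                fun h => hvC (hmemC _ ⟨p, hp, Or.inr h.symm⟩)⟩
            · exact (hMm i).2 p hp q hq hpq
        have := hMmax i _ hM'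
        rw [Finset.card_insert_of_notMem hnm] at this
        omega
      have hS'ub : S'.card ≤ 2^(L-1) := by
        have hinj : Set.InjOn (fun v => (fun j : {j : Fin k // j ∈ Bᶜ} => c j.1 v)) ↑S' := by
          intro u hu v hv huv
          by_contra hne
          obtain ⟨i, hi, -⟩ := huniq u v hne
          rw [mem_edgeSet] at hi
          have hiB : i ∉ B := hnotB u v hu hv i hi
          have := congrFun huv ⟨i, Finset.mem_compl.mpr hiB⟩
          exact hc i u v hi this
        have h1 := Finset.card_le_card_of_injOn _ (fun a _ => Finset.mem_univ _) hinj
        rw [Finset.card_univ] at h1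
        have h2 : Fintype.card ({j : Fin k // j ∈ Bᶜ} → Fin 2) = 2 ^ (L-1) := by
          rw [Fintype.card_fun, Fintype.card_fin, Fintype.card_coe,
            Finset.card_compl, Fintype.card_fin, hBcard]
          congr 1
          omega
        omega
      omega
    -- edge counting
    set F : Fin k → Finset (Sym2 (Fin n)) := fun i =>
      Finset.univ.filter (fun e => e ∈ (P i).edgeSet ∧ ∀ z ∈ e, z ∈ S) with hFdef
    have hFcard : ∀ i ∈ Gd, t*(t+1)/2 ≤ (F i).card := by
      intro i hi
      rw [hGdef, Finset.mem_filter] at hi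
      obtain ⟨M', hM'sub, hM'card⟩ := Finset.exists_subset_card_eq (s := Mm i) hi.2
      have hE : ∀ u v : Fin n, (P i).Adj u v → u ∈ S → v ∈ S → s(u,v) ∈ F i := by
        intro u v h hu hv
        rw [hFdef, Finset.mem_filter]
        refine ⟨Finset.mem_univ _, ?_, ?_⟩
        · rw [mem_edgeSet]; exact h
        · intro z hz
          rcases Sym2.mem_iff.mp hz with rfl | rfl <;> assumption
      have := matching_edge_bound (hfree i) hE ((hMm i).subset hM'sub)
      rw [hM'card] at this
      exact this
    have hdisjF : ∀ i ∈ Gd, ∀ j ∈ Gd, i ≠ j → Disjoint (F i) (F j) := by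
      intro i _ j _ hij
      rw [Finset.disjoint_left]
      intro e hei hej
      rw [hFdef, Finset.mem_filter] at hei hej
      obtain ⟨u, v, rfl⟩ : ∃ u v, e = s(u,v) := e.ind (fun u v => ⟨u, v, rfl⟩)
      have huv : u ≠ v := by
        have := hei.2.1
        rw [mem_edgeSet] at this
        exact this.ne
      obtain ⟨i₀, -, hiuniq⟩ := huniq u v huv
      exact hij ((hiuniq i hei.2.1).trans (hiuniq j hej.2.1).symm)
    have hsum : Gd.card * (t*(t+1)/2) ≤ (Gd.biUnion F).card := by
      rw [Finset.card_biUnion hdisjF]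
      calc Gd.card * (t*(t+1)/2) = Gd.card • (t*(t+1)/2) := by rw [smul_eq_mul]
        _ ≤ ∑ i ∈ Gd, (F i).card := Finset.card_nsmul_le_sum _ _ _ hFcard
    have htot : (Gd.biUnion F).card ≤ (2^L + 1) * 2^L / 2 := by
      have hsub : Gd.biUnion F ⊆ S.sym2 := by
        intro e he
        obtain ⟨i, -, hei⟩ := Finset.mem_biUnion.mp he
        rw [hFdef, Finset.mem_filter] at hei
        exact Finset.mem_sym2_iff.mpr hei.2.2
      have := Finset.card_le_card hsub
      rw [Finset.card_sym2, hScard] at this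
      rw [Nat.choose_two_right] at this
      simpa using this
    -- arithmetic contradiction
    have hA1 : L * (t*(t+1)/2) ≤ (2^L + 1) * 2^L / 2 :=
      le_trans (Nat.mul_le_mul_right _ hGL) (le_trans hsum htot)
    have hA2 : L * (t*(t+1)) ≤ (2^L + 1) * 2^L := by
      obtain ⟨e, he⟩ := (Nat.even_mul_succ_self t).two_dvd
      obtain ⟨f, hf⟩ : 2 ∣ (2^L + 1) * 2^L := Dvd.dvd.mul_left (dvd_pow_self 2 (by omega)) _
      rw [he, hf] at hA1 ⊢
      rw [Nat.mul_div_cancel_left e (by norm_num), Nat.mul_div_cancel_left f (by norm_num)] at hA1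
      calc L * (2*e) = 2 * (L*e) := by ring
        _ ≤ 2 * f := Nat.mul_le_mul_left _ hA1
    have hLt : 2^L * 4 ≤ L * t := by
      have h1 : (16*(d+1)^2) * t ≤ L * t := Nat.mul_le_mul_right _ hcon
      have h2 : (16*(d+1)^2) * t = (16*(d+1)) * (t*(d+1)) := by ring
      have h3 : 16 * (2^(L-2)) ≤ (16*(d+1)) * (t*(d+1)) :=
        Nat.mul_le_mul (by omega) htlb
      omega
    have hmm : L*(t*t) < 2^L * 2^L := by
      have h1 : L*(t*(t+1)) = L*(t*t) + L*t := by ring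
      have h2 : (2^L + 1) * 2^L = 2^L*2^L + 2^L := by ring
      have hm1 : 1 ≤ 2^L := Nat.one_le_two_pow
      omega
    have hfinal : L < 16*(d+1)^2 := by
      have h1 : L * (2^(L-2) * 2^(L-2)) ≤ L * ((t*(d+1)) * (t*(d+1))) :=
        Nat.mul_le_mul_left _ (Nat.mul_le_mul htlb htlb)
      have h2 : L * ((t*(d+1)) * (t*(d+1))) = (L*(t*t)) * ((d+1)*(d+1)) := by ring
      have h3 : (L*(t*t)) * ((d+1)*(d+1)) < (2^L*2^L) * ((d+1)*(d+1)) :=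
        (Nat.mul_lt_mul_right (by positivity)).mpr hmm
      have h4 : (2^L*2^L) * ((d+1)*(d+1)) = (16*(d+1)^2) * (2^(L-2)*2^(L-2)) := by
        have hLe : 2^L = 2^(L-2)*4 := by omega
        rw [hLe]; ring
      have h5 : L * (2^(L-2) * 2^(L-2)) < (16*(d+1)^2) * (2^(L-2)*2^(L-2)) := by
        calc L * (2^(L-2) * 2^(L-2)) ≤ L * ((t*(d+1)) * (t*(d+1))) := h1
          _ = (L*(t*t)) * ((d+1)*(d+1)) := h2
          _ < (2^L*2^L) * ((d+1)*(d+1)) := h3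
          _ = (16*(d+1)^2) * (2^(L-2)*2^(L-2)) := h4
      exact lt_of_mul_lt_mul_right h5 (Nat.zero_le _)
    exact absurd hfinal (not_lt.mpr hcon)
  -- real arithmetic
  have hd1 : (0:ℝ) < 4 * (d+1) := by positivity
  have hsq : Real.sqrt L < 4 * (d+1) := by
    rw [show ((4:ℝ) * (d+1)) = ((4*(d+1) : ℕ) : ℝ) by push_cast; ring]
    rw [Real.sqrt_lt' (by positivity)]
    push_cast
    have : (L : ℝ) < 16 * (d+1)^2 := by exact_mod_cast hmain
    nlinarith
  have hkreal : (k:ℝ) = L + d := by exact_mod_cast hkd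
  rw [hkreal]
  have : Real.sqrt L / 4 < d + 1 := by linarith
  linarith
end

section
/- For n ≥ 4, the minimum number of {P₄, C₄}-avoiding bipartite graphs (i.e., disjoint unions of stars) needed to partition E(K_n) equals ⌈n/2⌉ + 1. -/
open SimpleGraph

noncomputable def chiStarOrchard (n : ℕ) : ℕ :=
  sInf {k | ∃ P : Fin k → SimpleGraph (Fin n),
    IsBipartitePartition n k P ∧ ∀ i, Avoids (P i) pathP4 ∧ Avoids (P i) cycleC4}



/-! ### Auxiliary material -/

instance : DecidableRel pathP4.Adj :=
  fun _ _ => inferInstanceAs (Decidable (_ ∨ _))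
instance : DecidableRel cycleC4.Adj :=
  fun _ _ => inferInstanceAs (Decidable (_ ∨ _))

/-- The local "star forest" property: a neighbor of a vertex of degree ≥ 2 has degree 1. -/
def sfProp {V : Type} (G : SimpleGraph V) : Prop :=
  ∀ ⦃a b c : V⦄, G.Adj a b → G.Adj b c → a ≠ c → ∀ ⦃d⦄, G.Adj a d → d = b

/-! #### Upper bound construction -/

def assign (n a b : ℕ) : ℕ :=
  if a / 2 = b / 2 then n / 2
  else if a / 2 = n / 2 ∨ b / 2 = n / 2 then n / 2 + 1
  else if a % 2 = b % 2 then (if a / 2 ≤ b / 2 then a / 2 else b / 2)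
  else (if a / 2 ≤ b / 2 then b / 2 else a / 2)

lemma assign_comm (n a b : ℕ) : assign n a b = assign n b a := by
  unfold assign; split_ifs <;> omega

lemma assign_lt (n a b : ℕ) (ha : a < n) (hb : b < n) :
    assign n a b < (n + 1) / 2 + 1 := by
  unfold assign; split_ifs <;> omega

set_option maxHeartbeats 3200000 in
lemma assign_sf (n a b c d i : ℕ) (ha : a < n) (hb : b < n) (hc : c < n) (hd : d < n)
    (hab : a ≠ b) (h1 : assign n a b = i) (hbc : b ≠ c) (h2 : assign n b c = i)
    (hac : a ≠ c) (had : a ≠ d) (h3 : assign n a d = i) : d = b := by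
  unfold assign at h1 h2 h3
  split_ifs at h1 h2 h3 <;> omega

def colorOf (n i v : ℕ) : ℕ :=
  if i < n / 2 then (if v / 2 = i then 0 else 1)
  else if i = n / 2 then v % 2
  else (if v / 2 = n / 2 then 0 else 1)

lemma colorOf_lt (n i v : ℕ) : colorOf n i v < 2 := by
  unfold colorOf; split_ifs <;> omega

lemma colorOf_valid (n i a b : ℕ) (ha : a < n) (hb : b < n) (hab : a ≠ b)
    (h : assign n a b = i) : colorOf n i a ≠ colorOf n i b := by
  unfold assign at h; unfold colorOf; split_ifs at h ⊢ <;> omega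

def forests (n : ℕ) (i : Fin ((n+1)/2+1)) : SimpleGraph (Fin n) where
  Adj a b := a ≠ b ∧ assign n a.val b.val = i.val
  symm := by
    constructor
    intro a b ⟨h1, h2⟩
    exact ⟨h1.symm, (assign_comm n b a) ▸ h2⟩
  loopless := by constructor; intro a ⟨h, _⟩; exact h rfl

lemma forests_colorable (n : ℕ) (i : Fin ((n+1)/2+1)) : (forests n i).Colorable 2 := by
  refine ⟨Coloring.mk (fun v => (⟨colorOf n i.val v.val, colorOf_lt _ _ _⟩ : Fin 2)) ?_⟩
  intro v w ⟨hne, hass⟩ h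
  exact colorOf_valid n i.val v.val w.val v.isLt w.isLt
    (fun hh => hne (Fin.ext hh)) hass (congrArg Fin.val h)

lemma forests_partition (n : ℕ) :
    ∀ e ∈ (⊤ : SimpleGraph (Fin n)).edgeSet, ∃! i, e ∈ (forests n i).edgeSet := by
  intro e he
  induction e with
  | h a b =>
    rw [mem_edgeSet, top_adj] at he
    have hab : a.val ≠ b.val := fun h => he (Fin.ext h)
    refine ⟨⟨assign n a.val b.val, assign_lt n _ _ a.isLt b.isLt⟩, ?_, ?_⟩
    · show s(a,b) ∈ _
      rw [mem_edgeSet]; exact ⟨he, rfl⟩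
    · intro j hj
      have hj' : (forests n j).Adj a b := (mem_edgeSet _).mp hj
      exact Fin.ext hj'.2.symm

lemma forests_sf (n : ℕ) (i : Fin ((n+1)/2+1)) : sfProp (forests n i) := by
  intro a b c hab hbc hac d had
  have := assign_sf n a.val b.val c.val d.val i.val a.isLt b.isLt c.isLt d.isLt
    (fun h => hab.1 (Fin.ext h)) hab.2 (fun h => hbc.1 (Fin.ext h)) hbc.2
    (fun h => hac (Fin.ext h)) (fun h => had.1 (Fin.ext h)) had.2
  exact Fin.ext this

/-- From the star forest property we get avoidance. -/
lemma sf_avoids_aux {n : ℕ} {G : SimpleGraph (Fin n)} (hG : sfProp G)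
    (H : SimpleGraph (Fin 4)) (h01 : H.Adj 0 1) (h12 : H.Adj 1 2) (h23 : H.Adj 2 3) :
    IsEmpty (H ↪g (G.induce G.support)) := by
  constructor
  intro f
  have adj : ∀ {i j : Fin 4}, H.Adj i j → G.Adj (f i).val (f j).val := by
    intro i j h
    exact f.map_rel_iff.mpr h
  have h1 : G.Adj (f 1).val (f 2).val := adj h12
  have h2 : G.Adj (f 2).val (f 3).val := adj h23
  have h3 : G.Adj (f 1).val (f 0).val := adj h01.symm
  have h13 : (f 1).val ≠ (f 3).val := by
    intro h; have := f.injective (Subtype.ext h); exact absurd this (by decide)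
  have := hG h1 h2 h13 h3
  have := f.injective (Subtype.ext this)
  exact absurd this (by decide)

lemma sf_avoids {n : ℕ} {G : SimpleGraph (Fin n)} (hG : sfProp G) :
    Avoids G pathP4 ∧ Avoids G cycleC4 :=
  ⟨sf_avoids_aux hG pathP4 (Or.inl rfl) (Or.inl rfl) (Or.inl rfl),
   sf_avoids_aux hG cycleC4 (Or.inl rfl) (Or.inl rfl) (Or.inl rfl)⟩

/-! #### From avoidance back to the star forest property -/

def embedTable {n : ℕ} (G : SimpleGraph (Fin n)) (H : SimpleGraph (Fin 4)) (v : Fin 4 → Fin n)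
    (hs : ∀ i, v i ∈ G.support) (hinj : Function.Injective v)
    (hiff : ∀ i j, H.Adj i j ↔ G.Adj (v i) (v j)) : H ↪g (G.induce G.support) where
  toFun i := ⟨v i, hs i⟩
  inj' i j h := hinj (congrArg Subtype.val h)
  map_rel_iff' := by
    intro i j
    simp only [Function.Embedding.coeFn_mk, comap_adj, Function.Embedding.coe_subtype]
    exact (hiff i j).symm

lemma triangle_free {V : Type} {G : SimpleGraph V} (h : G.Colorable 2) :
    ∀ {x y z : V}, G.Adj x y → G.Adj y z → G.Adj z x → False := by
  intro x y z h1 h2 h3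
  obtain ⟨C⟩ := h
  have a1 := C.valid h1
  have a2 := C.valid h2
  have a3 := C.valid h3
  have b1 : (C x).val < 2 := (C x).isLt
  have b2 : (C y).val < 2 := (C y).isLt
  have b3 : (C z).val < 2 := (C z).isLt
  rw [Fin.ne_iff_vne] at a1 a2 a3
  omega

lemma sf_of_avoids {n : ℕ} {G : SimpleGraph (Fin n)} (hcol : G.Colorable 2)
    (hp : Avoids G pathP4) (hc : Avoids G cycleC4) : sfProp G := by
  intro a b c hab hbc hac d had
  by_contra hdb
  have hda : d ≠ a := fun h => G.loopless.irrefl a (h ▸ had)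
  have hnac : ¬ G.Adj a c := fun h => triangle_free hcol hab hbc h.symm
  have hdc : d ≠ c := fun h => hnac (h ▸ had)
  have hnbd : ¬ G.Adj b d := fun h => triangle_free hcol hab h had.symm
  have hsupp : ∀ x : Fin n, (∃ y, G.Adj x y) → x ∈ G.support := fun x h => (G.mem_support).mpr h
  have hsd : d ∈ G.support := hsupp d ⟨a, had.symm⟩
  have hsa : a ∈ G.support := hsupp a ⟨b, hab⟩
  have hsb : b ∈ G.support := hsupp b ⟨a, hab.symm⟩
  have hsc : c ∈ G.support := hsupp c ⟨b, hbc.symm⟩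
  have hdb' : d ≠ b := hdb
  have hinj : Function.Injective ![d, a, b, c] := by
    intro i j hij
    fin_cases i <;> fin_cases j <;> simp at hij ⊢ <;>
      first
        | rfl
        | exact absurd hij hda | exact absurd hij hda.symm
        | exact absurd hij hdb' | exact absurd hij hdb'.symm
        | exact absurd hij hdc | exact absurd hij hdc.symm
        | exact absurd hij hab.ne | exact absurd hij hab.ne.symm
        | exact absurd hij hac | exact absurd hij hac.symm
        | exact absurd hij hbc.ne | exact absurd hij hbc.ne.symm
  have hsall : ∀ i, (![d, a, b, c]) i ∈ G.support := by
    intro i; fin_cases i <;> assumption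
  have hnotdb : ¬ G.Adj d b := fun h => hnbd h.symm
  have hnotca : ¬ G.Adj c a := fun h => hnac h.symm
  by_cases hcd : G.Adj c d
  · refine hc.false (embedTable G cycleC4 ![d, a, b, c] hsall hinj ?_)
    intro i j
    fin_cases i <;> fin_cases j <;>
      first
        | exact iff_of_false (by decide) (G.loopless.irrefl _)
        | exact iff_of_true (by decide) had.symm
        | exact iff_of_true (by decide) had
        | exact iff_of_true (by decide) hab
        | exact iff_of_true (by decide) hab.symm
        | exact iff_of_true (by decide) hbc
        | exact iff_of_true (by decide) hbc.symm
        | exact iff_of_true (by decide) hcd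
        | exact iff_of_true (by decide) hcd.symm
        | exact iff_of_false (by decide) hnbd
        | exact iff_of_false (by decide) hnotdb
        | exact iff_of_false (by decide) hnac
        | exact iff_of_false (by decide) hnotca
  · have hnotdc : ¬ G.Adj d c := fun h => hcd h.symm
    refine hp.false (embedTable G pathP4 ![d, a, b, c] hsall hinj ?_)
    intro i j
    fin_cases i <;> fin_cases j <;>
      first
        | exact iff_of_false (by decide) (G.loopless.irrefl _)
        | exact iff_of_true (by decide) had.symm
        | exact iff_of_true (by decide) had
        | exact iff_of_true (by decide) hab
        | exact iff_of_true (by decide) hab.symm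
        | exact iff_of_true (by decide) hbc
        | exact iff_of_true (by decide) hbc.symm
        | exact iff_of_false (by decide) hnbd
        | exact iff_of_false (by decide) hnotdb
        | exact iff_of_false (by decide) hnac
        | exact iff_of_false (by decide) hnotca
        | exact iff_of_false (by decide) hcd
        | exact iff_of_false (by decide) hnotdc

open scoped Classical in
lemma sf_count {n : ℕ} {G : SimpleGraph (Fin n)} (hsf : sfProp G) (s : Finset (Fin n))
    (hsup : G.support ⊆ ↑s) (h3 : 3 ≤ s.card) :
    G.edgeFinset.card + 1 ≤ s.card ∧
    (G.edgeFinset.card + 1 = s.card → ∃ c ∈ s, ∀ x ∈ s, x ≠ c → G.Adj c x) := by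
  classical
  set E := G.edgeFinset.card with hE
  set C := s.filter (fun v => 2 ≤ G.degree v) with hC
  set L := s.filter (fun v => G.degree v = 1) with hL
  set I := s.filter (fun v => G.degree v = 0) with hI
  have e1 : (s.filter (fun v => ¬ 2 ≤ G.degree v)).filter (fun v => G.degree v = 1) = L := by
    rw [Finset.filter_filter, hL]; apply Finset.filter_congr; intro x _
    constructor
    · rintro ⟨_, h⟩; exact h
    · intro h; exact ⟨by omega, h⟩
  have e2 : (s.filter (fun v => ¬ 2 ≤ G.degree v)).filter (fun v => ¬ G.degree v = 1) = I := by
    rw [Finset.filter_filter, hI]; apply Finset.filter_congr; intro x _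
    constructor
    · rintro ⟨h1, h2⟩; omega
    · intro h; constructor <;> omega
  -- cardinality partition
  have hcard : C.card + L.card + I.card = s.card := by
    have h1 := Finset.card_filter_add_card_filter_not
      (s := s) (p := fun v => 2 ≤ G.degree v)
    rw [← hC] at h1
    have h2 := Finset.card_filter_add_card_filter_not
      (s := s.filter (fun v => ¬ 2 ≤ G.degree v)) (p := fun v => G.degree v = 1)
    rw [e1, e2] at h2
    omega
  -- degrees vanish off s
  have hdeg0 : ∀ x : Fin n, x ∉ s → G.degree x = 0 := by
    intro x hx
    rw [← card_neighborFinset_eq_degree, Finset.card_eq_zero]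
    ext y
    simp only [mem_neighborFinset, Finset.notMem_empty, iff_false]
    intro hadj
    exact hx (hsup ((mem_support G).mpr ⟨y, hadj⟩))
  -- degree sum over s
  have hsum : ∑ v ∈ s, G.degree v = 2 * E := by
    rw [hE, ← G.sum_degrees_eq_twice_card_edges]
    exact Finset.sum_subset (Finset.subset_univ s) (fun x _ hx => hdeg0 x hx)
  -- split the sum
  have hLsum : ∑ v ∈ L, G.degree v = L.card := by
    rw [Finset.card_eq_sum_ones]
    exact Finset.sum_congr rfl (fun v hv => (Finset.mem_filter.mp hv).2)
  have hIsum : ∑ v ∈ I, G.degree v = 0 :=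
    Finset.sum_eq_zero (fun v hv => (Finset.mem_filter.mp hv).2)
  have hsplit : ∑ v ∈ s, G.degree v = (∑ v ∈ C, G.degree v) + L.card := by
    rw [← Finset.sum_filter_add_sum_filter_not s (fun v => 2 ≤ G.degree v), ← hC]
    congr 1
    rw [← Finset.sum_filter_add_sum_filter_not
      (s.filter (fun v => ¬ 2 ≤ G.degree v)) (fun v => G.degree v = 1), e1, e2, hLsum, hIsum]
    omega
  -- leaves have unique neighbors
  have hleaf : ∀ x : Fin n, G.degree x = 1 → ∀ u w, G.Adj x u → G.Adj x w → u = w := by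
    intro x hx u w hu hw
    rw [← card_neighborFinset_eq_degree, Finset.card_eq_one] at hx
    obtain ⟨a, ha⟩ := hx
    have h1 : u ∈ G.neighborFinset x := (mem_neighborFinset G x u).mpr hu
    have h2 : w ∈ G.neighborFinset x := (mem_neighborFinset G x w).mpr hw
    rw [ha, Finset.mem_singleton] at h1 h2
    rw [h1, h2]
  -- neighbors of centers are leaves
  have hcenter : ∀ c ∈ C, ∀ x, G.Adj c x → G.degree x = 1 := by
    intro c hc x hadj
    have h2c : 1 < (G.neighborFinset c).card := by
      rw [card_neighborFinset_eq_degree]; exact (Finset.mem_filter.mp hc).2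
    obtain ⟨y, hy, hyx⟩ := Finset.exists_mem_ne h2c x
    have hadjy : G.Adj c y := (mem_neighborFinset G c y).mp hy
    have huniq := hsf hadj.symm hadjy (fun h => hyx h.symm)
    rw [← card_neighborFinset_eq_degree, Finset.card_eq_one]
    refine ⟨c, ?_⟩
    ext z
    simp only [mem_neighborFinset, Finset.mem_singleton]
    exact ⟨fun h => huniq h, fun h => h ▸ hadj.symm⟩
  -- D = card of biUnion of neighborhoods
  have hdisj : ∀ c1 ∈ C, ∀ c2 ∈ C, c1 ≠ c2 →
      Disjoint (G.neighborFinset c1) (G.neighborFinset c2) := by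
    intro c1 h1 c2 h2 hne
    rw [Finset.disjoint_left]
    intro x hx1 hx2
    have a1 : G.Adj c1 x := (mem_neighborFinset G c1 x).mp hx1
    have a2 : G.Adj c2 x := (mem_neighborFinset G c2 x).mp hx2
    exact hne (hleaf x (hcenter c1 h1 x a1) c1 c2 a1.symm a2.symm)
  have hbi : (C.biUnion (fun c => G.neighborFinset c)).card = ∑ c ∈ C, G.degree c := by
    rw [Finset.card_biUnion hdisj]
    exact Finset.sum_congr rfl (fun c _ => card_neighborFinset_eq_degree G c)
  have hbiL : C.biUnion (fun c => G.neighborFinset c) ⊆ L := by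
    intro x hx
    rw [Finset.mem_biUnion] at hx
    obtain ⟨c, hc, hxc⟩ := hx
    have hadj : G.Adj c x := (mem_neighborFinset G c x).mp hxc
    rw [hL, Finset.mem_filter]
    exact ⟨hsup ((mem_support G).mpr ⟨c, hadj.symm⟩), hcenter c hc x hadj⟩
  have hDL : ∑ c ∈ C, G.degree c ≤ L.card := by
    rw [← hbi]; exact Finset.card_le_card hbiL
  have hD0 : C.card = 0 → ∑ c ∈ C, G.degree c = 0 := by
    intro h0
    rw [Finset.card_eq_zero] at h0
    rw [h0, Finset.sum_empty]
  -- the bound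
  have hLle : L.card ≤ s.card := hcard ▸ by omega
  constructor
  · rcases Nat.eq_zero_or_pos C.card with h0 | h1
    · omega
    · omega
  · intro heq
    -- equality analysis
    have hCpos : 1 ≤ C.card := by
      by_contra h0
      omega
    have hC1 : C.card = 1 := by omega
    have hI0 : I.card = 0 := by omega
    have hLE : L.card = E := by omega
    have hDeq : ∑ c ∈ C, G.degree c = L.card := by omega
    obtain ⟨c, hc⟩ := Finset.card_eq_one.mp hC1
    have hcs : c ∈ s := by
      have : c ∈ C := hc ▸ Finset.mem_singleton_self c
      exact Finset.mem_of_mem_filter c this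
    refine ⟨c, hcs, ?_⟩
    -- N(c) = L
    have hNL : G.neighborFinset c = L := by
      apply Finset.eq_of_subset_of_card_le
      · intro x hx
        apply hbiL
        rw [Finset.mem_biUnion]
        exact ⟨c, hc ▸ Finset.mem_singleton_self c, hx⟩
      · rw [card_neighborFinset_eq_degree]
        have : ∑ x ∈ C, G.degree x = G.degree c := by
          rw [hc, Finset.sum_singleton]
        omega
    intro x hxs hxc
    rcases Nat.lt_or_ge (G.degree x) 1 with hd | hd
    · exfalso
      have : x ∈ I := Finset.mem_filter.mpr ⟨hxs, by omega⟩
      rw [Finset.card_eq_zero] at hI0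
      exact absurd (hI0 ▸ this) (Finset.notMem_empty x)
    rcases Nat.lt_or_ge (G.degree x) 2 with hd2 | hd2
    · have : x ∈ L := Finset.mem_filter.mpr ⟨hxs, by omega⟩
      rw [← hNL, mem_neighborFinset] at this
      exact this
    · exfalso
      have : x ∈ C := Finset.mem_filter.mpr ⟨hxs, hd2⟩
      rw [hc, Finset.mem_singleton] at this
      exact hxc this

open scoped Classical in
lemma lower_bound {n k : ℕ} (hn : 4 ≤ n) (P : Fin k → SimpleGraph (Fin n))
    (hpart : IsBipartitePartition n k P) (hsfp : ∀ i, sfProp (P i)) :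
    (n + 1) / 2 + 1 ≤ k := by
  classical
  obtain ⟨hcol, huniq⟩ := hpart
  by_contra hcon
  have h2k : 2 * k ≤ n + 1 := by omega
  -- no edge lies in two distinct templates
  have hdisj : ∀ i j : Fin k, i ≠ j → ∀ (x y : Fin n), (P i).Adj x y → (P j).Adj x y → False := by
    intro i j hij x y hxi hxj
    obtain ⟨u, _, hu⟩ := huniq s(x,y) ((mem_edgeSet ⊤).mpr hxi.ne)
    have hi : i = u := hu i ((mem_edgeSet _).mpr hxi)
    have hj : j = u := hu j ((mem_edgeSet _).mpr hxj)
    exact hij (hi.trans hj.symm)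
  -- conflict between two "spanning stars" on a common set
  have hconflict : ∀ (i j : Fin k), i ≠ j → ∀ (s : Finset (Fin n)), 3 ≤ s.card →
      ∀ ci ∈ s, ∀ cj ∈ s, (∀ x ∈ s, x ≠ ci → (P i).Adj ci x) →
      (∀ x ∈ s, x ≠ cj → (P j).Adj cj x) → False := by
    intro i j hij s hs ci hci cj hcj hsi hsj
    by_cases hcc : ci = cj
    · obtain ⟨x, hx, hxci⟩ := Finset.exists_mem_ne (s := s) (by omega) ci
      exact hdisj i j hij ci x (hsi x hx hxci) (hcc ▸ hsj x hx (hcc ▸ hxci))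
    · exact hdisj i j hij ci cj (hsi cj hcj (Ne.symm hcc)) ((hsj ci hci hcc).symm)
  -- total doubled edge count
  have htot : 2 * (∑ i : Fin k, (P i).edgeFinset.card) = n * (n - 1) := by
    have hUnion : (⊤ : SimpleGraph (Fin n)).edgeFinset
        = Finset.univ.biUnion (fun i => (P i).edgeFinset) := by
      ext e
      simp only [Finset.mem_biUnion, Finset.mem_univ, true_and]
      constructor
      · intro he
        obtain ⟨u, hu, _⟩ := huniq e (mem_edgeFinset.mp he)
        exact ⟨u, mem_edgeFinset.mpr hu⟩
      · rintro ⟨i, hi⟩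
        exact (edgeFinset_mono (le_top : P i ≤ ⊤)) hi
    have hdisjE : ∀ i ∈ (Finset.univ : Finset (Fin k)), ∀ j ∈ Finset.univ, i ≠ j →
        Disjoint (P i).edgeFinset (P j).edgeFinset := by
      intro i _ j _ hij
      rw [Finset.disjoint_left]
      intro e hei hej
      induction e with
      | h x y =>
        exact hdisj i j hij x y ((mem_edgeSet _).mp (mem_edgeFinset.mp hei))
          ((mem_edgeSet _).mp (mem_edgeFinset.mp hej))
    have hcb : (⊤ : SimpleGraph (Fin n)).edgeFinset.card
        = ∑ i : Fin k, (P i).edgeFinset.card := by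
      rw [hUnion, Finset.card_biUnion hdisjE]
    have hdeg : ∑ v : Fin n, (⊤ : SimpleGraph (Fin n)).degree v
        = 2 * (⊤ : SimpleGraph (Fin n)).edgeFinset.card :=
      SimpleGraph.sum_degrees_eq_twice_card_edges _
    have hdval : ∀ v : Fin n, (⊤ : SimpleGraph (Fin n)).degree v = n - 1 := by
      intro v
      rw [SimpleGraph.complete_graph_degree, Fintype.card_fin]
    rw [Finset.sum_congr rfl (fun v _ => hdval v), Finset.sum_const, Finset.card_univ,
      Fintype.card_fin, smul_eq_mul] at hdeg
    rw [← hcb, ← hdeg]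
  -- supports in univ
  have huniv3 : (3 : ℕ) ≤ (Finset.univ : Finset (Fin n)).card := by
    rw [Finset.card_univ, Fintype.card_fin]; omega
  have hbound : ∀ i, (P i).edgeFinset.card + 1 ≤ n := by
    intro i
    have := (sf_count (hsfp i) Finset.univ (by simp) huniv3).1
    rwa [Finset.card_univ, Fintype.card_fin] at this
  by_cases hex : ∃ i0 : Fin k, (P i0).edgeFinset.card + 1 = n
  · -- one spanning star
    obtain ⟨i0, hi0⟩ := hex
    obtain ⟨c, _, hstar⟩ := (sf_count (hsfp i0) Finset.univ (by simp) huniv3).2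
      (by rwa [Finset.card_univ, Fintype.card_fin])
    have hstar' : ∀ x : Fin n, x ≠ c → (P i0).Adj c x :=
      fun x hx => hstar x (Finset.mem_univ x) hx
    -- other templates avoid c
    have hsupj : ∀ j : Fin k, j ≠ i0 → (P j).support ⊆ ↑(Finset.univ.erase c) := by
      intro j hj v hv
      obtain ⟨w, hw⟩ := (mem_support _).mp hv
      simp only [Finset.coe_erase, Set.mem_diff, Set.mem_singleton_iff, Finset.coe_univ,
        Set.mem_univ, true_and]
      intro hvc
      subst hvc
      exact hdisj j i0 hj v w hw (hstar' w hw.ne')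
    have hec : (Finset.univ.erase c).card = n - 1 := by
      rw [Finset.card_erase_of_mem (Finset.mem_univ c), Finset.card_univ, Fintype.card_fin]
    have hec3 : 3 ≤ (Finset.univ.erase c).card := by omega
    have hboundj : ∀ j : Fin k, j ≠ i0 → (P j).edgeFinset.card + 1 ≤ n - 1 := by
      intro j hj
      have := (sf_count (hsfp j) (Finset.univ.erase c) (hsupj j hj) hec3).1
      omega
    -- sum over the rest
    have hsplitsum : (P i0).edgeFinset.card
        + ∑ j ∈ Finset.univ.erase i0, (P j).edgeFinset.card
        = ∑ i : Fin k, (P i).edgeFinset.card :=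
      Finset.add_sum_erase Finset.univ (fun i => (P i).edgeFinset.card) (Finset.mem_univ i0)
    have hrest : 2 * (∑ j ∈ Finset.univ.erase i0, (P j).edgeFinset.card)
        = (n - 1) * (n - 2) := by
      have h1 : 2 * ((P i0).edgeFinset.card)
          + 2 * (∑ j ∈ Finset.univ.erase i0, (P j).edgeFinset.card) = n * (n-1) := by
        rw [← htot]; omega
      -- n * (n-1) - 2*(n-1) = (n-1)*(n-2)
      have h2 : n * (n - 1) = (n - 1) * (n - 2) + 2 * (n - 1) := by
        obtain ⟨m, rfl⟩ : ∃ m, n = m + 4 := ⟨n - 4, by omega⟩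
        simp only [show m + 4 - 1 = m + 3 from rfl, show m + 4 - 2 = m + 2 from rfl]
        ring
      omega
    have hki : (Finset.univ.erase i0).card = k - 1 := by
      rw [Finset.card_erase_of_mem (Finset.mem_univ i0), Finset.card_univ, Fintype.card_fin]
    have hrle : ∑ j ∈ Finset.univ.erase i0, (P j).edgeFinset.card ≤ (k - 1) * (n - 2) := by
      have := Finset.sum_le_card_nsmul (Finset.univ.erase i0)
        (fun j => (P j).edgeFinset.card) (n - 2)
        (fun j hj => by
          show (P j).edgeFinset.card ≤ n - 2
          have := hboundj j (Finset.ne_of_mem_erase hj)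
          omega)
      rwa [hki, smul_eq_mul] at this
    -- conclude 2k = n+1 and n odd
    have hnm : (n - 1) * (n - 2) ≤ (2 * (k - 1)) * (n - 2) := by
      calc (n - 1) * (n - 2) = 2 * (∑ j ∈ Finset.univ.erase i0, (P j).edgeFinset.card) :=
            hrest.symm
        _ ≤ 2 * ((k - 1) * (n - 2)) := by omega
        _ = (2 * (k - 1)) * (n - 2) := by ring
    have hn1 : n - 1 ≤ 2 * (k - 1) := Nat.le_of_mul_le_mul_right hnm (by omega)
    have hkpos : 1 ≤ k := by
      by_contra hk0
      have : k = 0 := by omega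
      subst this
      simp at htot
      omega
    have h2keq : 2 * k = n + 1 := by omega
    have hkeq : 2 * (k - 1) = n - 1 := by omega
    -- all the rest have exactly n-2 edges
    have hall : ∀ j ∈ Finset.univ.erase i0, (P j).edgeFinset.card = n - 2 := by
      by_contra hnall
      push_neg at hnall
      obtain ⟨j0, hj0, hj0ne⟩ := hnall
      have hlt : ∑ j ∈ Finset.univ.erase i0, (P j).edgeFinset.card
          < ∑ j ∈ Finset.univ.erase i0, (n - 2) := by
        apply Finset.sum_lt_sum
        · intro j hj
          have := hboundj j (Finset.ne_of_mem_erase hj)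
          omega
        · refine ⟨j0, hj0, ?_⟩
          have := hboundj j0 (Finset.ne_of_mem_erase hj0)
          omega
      rw [Finset.sum_const, hki, smul_eq_mul] at hlt
      have hx : 2 * ((k-1) * (n-2)) = (2 * (k-1)) * (n-2) := by ring
      rw [hkeq] at hx
      omega
    -- pick two distinct templates other than i0
    have hk3 : 2 ≤ (Finset.univ.erase i0).card := by omega
    obtain ⟨j1, hj1, j2, hj2, hj12⟩ := Finset.one_lt_card.mp (by omega : 1 < (Finset.univ.erase i0).card)
    -- each is a spanning star on univ.erase c
    have hstarj : ∀ j ∈ Finset.univ.erase i0, ∃ cj ∈ Finset.univ.erase c,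
        ∀ x ∈ Finset.univ.erase c, x ≠ cj → (P j).Adj cj x := by
      intro j hj
      have hjne := Finset.ne_of_mem_erase hj
      apply (sf_count (hsfp j) (Finset.univ.erase c) (hsupj j hjne) hec3).2
      rw [hec, hall j hj]
      omega
    obtain ⟨c1, hc1, hs1⟩ := hstarj j1 hj1
    obtain ⟨c2, hc2, hs2⟩ := hstarj j2 hj2
    exact hconflict j1 j2 hj12 (Finset.univ.erase c) hec3 c1 hc1 c2 hc2 hs1 hs2
  · -- no spanning star: every template has at most n-2 edges
    push_neg at hex
    have hb2 : ∀ i, (P i).edgeFinset.card ≤ n - 2 := by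
      intro i
      have h1 := hbound i
      have h2 := hex i
      omega
    have hsle : ∑ i : Fin k, (P i).edgeFinset.card ≤ k * (n - 2) := by
      have := Finset.sum_le_card_nsmul Finset.univ
        (fun i => (P i).edgeFinset.card) (n - 2) (fun i _ => hb2 i)
      rwa [Finset.card_univ, Fintype.card_fin, smul_eq_mul] at this
    have hfin : n * (n - 1) ≤ (n + 1) * (n - 2) := by
      calc n * (n - 1) = 2 * (∑ i : Fin k, (P i).edgeFinset.card) := htot.symm
        _ ≤ 2 * (k * (n - 2)) := by omega
        _ = (2 * k) * (n - 2) := by ring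
        _ ≤ (n + 1) * (n - 2) := Nat.mul_le_mul_right _ h2k
    obtain ⟨m, rfl⟩ : ∃ m, n = m + 4 := ⟨n - 4, by omega⟩
    simp only [show m + 4 - 1 = m + 3 from rfl, show m + 4 - 2 = m + 2 from rfl] at hfin
    nlinarith [hfin]

/-- For `n ≥ 4`, `χ'_{P₄,C₄}(n) = ⌈n/2⌉ + 1`. -/
theorem chiStarOrchard_eq (n : ℕ) (hn : 4 ≤ n) :
    chiStarOrchard n = (n + 1) / 2 + 1 := by
  have hmem : ((n + 1) / 2 + 1) ∈ {k | ∃ P : Fin k → SimpleGraph (Fin n),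
      IsBipartitePartition n k P ∧ ∀ i, Avoids (P i) pathP4 ∧ Avoids (P i) cycleC4} := by
    refine ⟨forests n, ⟨forests_colorable n, forests_partition n⟩, ?_⟩
    intro i
    exact sf_avoids (forests_sf n i)
  apply le_antisymm
  · exact Nat.sInf_le hmem
  · apply le_csInf ⟨_, hmem⟩
    rintro k ⟨P, hpart, havoid⟩
    exact lower_bound hn P hpart
      (fun i => sf_of_avoids (hpart.1 i) (havoid i).1 (havoid i).2)
end

section
/- The minimum number of {P₄, C₄, S₄}-avoiding bipartite graphs needed to partition E(K_n) is (3/4)n + o(n). -/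
open SimpleGraph

noncomputable def chiCherryOrchard (n : ℕ) : ℕ :=
  sInf {k | ∃ P : Fin k → SimpleGraph (Fin n),
    IsBipartitePartition n k P ∧ ∀ i, Avoids (P i) pathP4 ∧ Avoids (P i) cycleC4 ∧ Avoids (P i) starS4}


section
variable {V : Type} {G : SimpleGraph V}

def mkEmb (v : Fin 4 → V) (hs : ∀ i, v i ∈ G.support) (hinj : Function.Injective v)
    {H : SimpleGraph (Fin 4)} (hadj : ∀ i j, H.Adj i j ↔ G.Adj (v i) (v j)) :
    H ↪g (G.induce G.support) where
  toFun i := ⟨v i, hs i⟩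
  inj' i j h := hinj (congrArg Subtype.val h)
  map_rel_iff' {i j} := (hadj i j).symm

lemma no_triangle (hc : G.Colorable 2) : ∀ a b c, G.Adj a b → G.Adj b c → G.Adj a c → False := by
  intro a b c hab hbc hac
  obtain ⟨C⟩ := hc
  have h1 := C.valid hab
  have h2 := C.valid hbc
  have h3 := C.valid hac
  have key : ∀ x : Fin 2, x = 0 ∨ x = 1 := by decide
  rcases key (C a) with h|h <;> rcases key (C b) with h'|h' <;> rcases key (C c) with h''|h'' <;>
    simp_all
end
def Hdeg {V : Type} (G : SimpleGraph V) : Prop :=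
  ∀ v a b c, G.Adj v a → G.Adj v b → G.Adj v c → a = b ∨ a = c ∨ b = c
def Hpen {V : Type} (G : SimpleGraph V) : Prop :=
  ∀ u v, G.Adj u v → (∀ a, G.Adj u a → a = v) ∨ (∀ a, G.Adj v a → a = u)
def Orchard {V : Type} (G : SimpleGraph V) : Prop := Hdeg G ∧ Hpen G

section
variable {V : Type} {G : SimpleGraph V}

lemma adj_of_emb {β : Type} {H : SimpleGraph β} (f : H ↪g (G.induce G.support))
    {i j : β} (h : H.Adj i j) : G.Adj (f i).val (f j).val := by
  have := f.map_rel_iff.mpr h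
  exact this

lemma val_inj_of_emb {β : Type} {H : SimpleGraph β} (f : H ↪g (G.induce G.support))
    {i j : β} (h : (f i).val = (f j).val) : i = j :=
  f.injective (Subtype.val_injective h)

lemma orchard_avoids (h : Orchard G) :
    Avoids G pathP4 ∧ Avoids G cycleC4 ∧ Avoids G starS4 := by
  obtain ⟨h1, h2⟩ := h
  refine ⟨⟨fun f => ?_⟩, ⟨fun f => ?_⟩, ⟨fun f => ?_⟩⟩
  · -- P4
    have a01 : G.Adj (f 0).val (f 1).val := adj_of_emb f (by first | exact Or.inl rfl | exact Or.inr rfl | exact ⟨by decide, Or.inl rfl⟩)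
    have a12 : G.Adj (f 1).val (f 2).val := adj_of_emb f (by first | exact Or.inl rfl | exact Or.inr rfl | exact ⟨by decide, Or.inl rfl⟩)
    have a23 : G.Adj (f 2).val (f 3).val := adj_of_emb f (by first | exact Or.inl rfl | exact Or.inr rfl | exact ⟨by decide, Or.inl rfl⟩)
    rcases h2 _ _ a12 with h | h
    · have := h _ a01.symm
      exact absurd (val_inj_of_emb f this.symm) (by decide)
    · have := h _ a23
      exact absurd (val_inj_of_emb f this) (by decide)
  · -- C4
    have a01 : G.Adj (f 0).val (f 1).val := adj_of_emb f (by first | exact Or.inl rfl | exact Or.inr rfl | exact ⟨by decide, Or.inl rfl⟩)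
    have a12 : G.Adj (f 1).val (f 2).val := adj_of_emb f (by first | exact Or.inl rfl | exact Or.inr rfl | exact ⟨by decide, Or.inl rfl⟩)
    have a03 : G.Adj (f 0).val (f 3).val := adj_of_emb f (by first | exact Or.inl rfl | exact Or.inr rfl | exact ⟨by decide, Or.inl rfl⟩)
    rcases h2 _ _ a01 with h | h
    · have := h _ a03
      exact absurd (val_inj_of_emb f this) (by decide)
    · have := h _ a12
      exact absurd (val_inj_of_emb f this) (by decide)
  · -- S4
    have a1 : G.Adj (f 0).val (f 1).val := adj_of_emb f (by first | exact Or.inl rfl | exact Or.inr rfl | exact ⟨by decide, Or.inl rfl⟩)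
    have a2 : G.Adj (f 0).val (f 2).val := adj_of_emb f (by first | exact Or.inl rfl | exact Or.inr rfl | exact ⟨by decide, Or.inl rfl⟩)
    have a3 : G.Adj (f 0).val (f 3).val := adj_of_emb f (by first | exact Or.inl rfl | exact Or.inr rfl | exact ⟨by decide, Or.inl rfl⟩)
    rcases h1 _ _ _ _ a1 a2 a3 with h | h | h <;>
      exact absurd (val_inj_of_emb f h) (by decide)


lemma avoids_orchard (hc : G.Colorable 2) (hP : Avoids G pathP4) (hC : Avoids G cycleC4)
    (hS : Avoids G starS4) : Orchard G := by
  have notri := no_triangle hc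
  constructor
  · intro v a b c hva hvb hvc
    by_contra hcon
    push_neg at hcon
    obtain ⟨hab, hac, hbc⟩ := hcon
    have nab : ¬ G.Adj a b := fun h => notri v a b hva h hvb
    have nac : ¬ G.Adj a c := fun h => notri v a c hva h hvc
    have nbc : ¬ G.Adj b c := fun h => notri v b c hvb h hvc
    have hvna : v ≠ a := G.ne_of_adj hva
    have hvnb : v ≠ b := G.ne_of_adj hvb
    have hvnc : v ≠ c := G.ne_of_adj hvc
    refine hS.elim (mkEmb ![v,a,b,c] ?_ ?_ ?_)
    · intro i; fin_cases i <;> simp [SimpleGraph.mem_support]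
      exacts [⟨a, hva⟩, ⟨v, hva.symm⟩, ⟨v, hvb.symm⟩, ⟨v, hvc.symm⟩]
    · intro i j hij
      fin_cases i <;> fin_cases j <;> simp_all <;> omega
    · intro i j
      have e1 := hva; have e2 := hvb; have e3 := hvc
      have e1' := hva.symm; have e2' := hvb.symm; have e3' := hvc.symm
      have n1 : ¬ G.Adj b a := fun h => nab h.symm
      have n2 : ¬ G.Adj c a := fun h => nac h.symm
      have n3 : ¬ G.Adj c b := fun h => nbc h.symm
      fin_cases i <;> fin_cases j <;>
        simp (config := { decide := true }) [starS4] <;>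
        first | assumption | exact G.irrefl _
  · intro u v huv
    by_contra hcon
    push_neg at hcon
    obtain ⟨⟨a, hua, hav⟩, ⟨b, hvb, hbu⟩⟩ := hcon
    have hanu : a ≠ u := fun h => G.irrefl (h ▸ hua)
    have hbnv : b ≠ v := fun h => G.irrefl (h ▸ hvb)
    have hanb : a ≠ b := by
      intro h; subst h
      exact notri u v a huv hvb hua
    have nub : ¬ G.Adj u b := fun h => notri u v b huv hvb h
    have nva : ¬ G.Adj v a := fun h => notri u v a huv h hua
    have hunv : u ≠ v := G.ne_of_adj huv
    by_cases hab : G.Adj a b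
    · refine hC.elim (mkEmb ![u,v,b,a] ?_ ?_ ?_)
      · intro i; fin_cases i <;> simp [SimpleGraph.mem_support]
        exacts [⟨v, huv⟩, ⟨u, huv.symm⟩, ⟨v, hvb.symm⟩, ⟨u, hua.symm⟩]
      · intro i j hij
        fin_cases i <;> fin_cases j <;> simp_all <;> omega
      · intro i j
        have e1 := huv; have e2 := hvb; have e3 := hab.symm; have e4 := hua.symm
        have e1' := huv.symm; have e2' := hvb.symm; have e3' := hab; have e4' := hua
        have n1 : ¬ G.Adj b u := fun h => nub h.symm
        have n2 : ¬ G.Adj a v := fun h => nva h.symm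
        fin_cases i <;> fin_cases j <;>
          simp (config := { decide := true }) [cycleC4] <;>
          first | assumption | exact G.irrefl _
    · refine hP.elim (mkEmb ![a,u,v,b] ?_ ?_ ?_)
      · intro i; fin_cases i <;> simp [SimpleGraph.mem_support]
        exacts [⟨u, hua.symm⟩, ⟨v, huv⟩, ⟨u, huv.symm⟩, ⟨v, hvb.symm⟩]
      · intro i j hij
        fin_cases i <;> fin_cases j <;> simp_all <;> omega
      · intro i j
        have e1 := hua.symm; have e2 := huv; have e3 := hvb
        have e1' := hua; have e2' := huv.symm; have e3' := hvb.symm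
        have n1 : ¬ G.Adj b u := fun h => nub h.symm
        have n2 : ¬ G.Adj a v := fun h => nva h.symm
        have n3 : ¬ G.Adj b a := fun h => hab h.symm
        have n4 : ¬ G.Adj v a := nva
        fin_cases i <;> fin_cases j <;>
          simp (config := { decide := true }) [pathP4] <;>
          first | assumption | exact G.irrefl _

lemma nbr_eq_singleton {n : ℕ} {G : SimpleGraph (Fin n)} [DecidableRel G.Adj] {u v : Fin n}
    (huv : G.Adj u v) (h : ∀ a, G.Adj u a → a = v) : G.neighborFinset u = {v} := by
  ext a
  simp only [SimpleGraph.mem_neighborFinset, Finset.mem_singleton]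
  exact ⟨fun ha => h a ha, fun ha => ha ▸ huv⟩

lemma orchard_count {n : ℕ} (G : SimpleGraph (Fin n)) [DecidableRel G.Adj]
    (h : Orchard G) : 3 * G.edgeFinset.card ≤ 2 * n := by
  obtain ⟨h1, h2⟩ := h
  have hdeg2 : ∀ v, G.degree v ≤ 2 := by
    intro v
    by_contra hd
    push_neg at hd
    rw [show (2 : ℕ) < G.degree v ↔ 2 < (G.neighborFinset v).card from Iff.rfl,
      Finset.two_lt_card] at hd
    obtain ⟨a, ha, b, hb, c, hc, hab, hac, hbc⟩ := hd
    rw [SimpleGraph.mem_neighborFinset] at ha hb hc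
    rcases h1 v a b c ha hb hc with h|h|h <;> tauto
  classical
  set F1 := Finset.univ.filter (fun v => G.degree v = 1) with hF1
  set F2 := Finset.univ.filter (fun v => G.degree v = 2) with hF2
  -- every edge contains a vertex of degree one, injectively
  have hE1 : G.edgeFinset.card ≤ F1.card := by
    apply Finset.card_le_card_of_injOn
      (fun e => if G.degree (Quot.out e).1 = 1 then (Quot.out e).1 else (Quot.out e).2)
    · intro e he
      rw [Finset.mem_coe, SimpleGraph.mem_edgeFinset] at he
      have hadj : G.Adj (Quot.out e).1 (Quot.out e).2 := by
        have : e ∈ G.edgeSet := he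
        rwa [← e.out_eq] at this
      by_cases hd : G.degree (Quot.out e).1 = 1
      · simp [hd, hF1]
      · simp only [hd, if_false, hF2, hF1, Finset.mem_coe, Finset.mem_filter, Finset.mem_univ, true_and]
        rcases h2 _ _ hadj with hp | hp
        · exact absurd ((nbr_eq_singleton hadj hp) ▸ rfl : G.degree (Quot.out e).1 = ({(Quot.out e).2} : Finset (Fin n)).card) (by simpa using hd)
        · rw [SimpleGraph.degree, nbr_eq_singleton hadj.symm hp]
          simp
    · intro e he e' he' hfe
      rw [Finset.mem_coe, SimpleGraph.mem_edgeFinset] at he he'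
      -- the common vertex w has degree 1
      set w := if G.degree (Quot.out e).1 = 1 then (Quot.out e).1 else (Quot.out e).2 with hw
      have hmem : ∀ (f : Sym2 (Fin n)), f ∈ G.edgeSet →
          (if G.degree (Quot.out f).1 = 1 then (Quot.out f).1 else (Quot.out f).2) ∈ f ∧
          G.degree (if G.degree (Quot.out f).1 = 1 then (Quot.out f).1 else (Quot.out f).2) = 1 := by
        intro f hf
        have hadj : G.Adj (Quot.out f).1 (Quot.out f).2 := by rwa [← f.out_eq] at hf
        by_cases hd : G.degree (Quot.out f).1 = 1
        · rw [if_pos hd]; exact ⟨Sym2.out_fst_mem f, hd⟩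
        · have hthis : G.degree (Quot.out f).2 = 1 := by
            rcases h2 _ _ hadj with hp | hp
            · exact absurd (by rw [SimpleGraph.degree, nbr_eq_singleton hadj hp]; simp) hd
            · rw [SimpleGraph.degree, nbr_eq_singleton hadj.symm hp]; simp
          rw [if_neg hd]; exact ⟨Sym2.out_snd_mem f, hthis⟩
      obtain ⟨hwin, hwdeg⟩ := hmem e he
      obtain ⟨hwin', hwdeg'⟩ := hmem e' he'
      dsimp only at hfe
      rw [← hfe] at hwin'
      -- e and e' both contain w, whose unique neighbour determines the edge
      obtain ⟨y, hy⟩ := (Sym2.mem_iff_exists).mp hwin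
      obtain ⟨y', hy'⟩ := (Sym2.mem_iff_exists).mp hwin'
      have hadjy : G.Adj w y := by rw [hy] at he; exact he
      have hadjy' : G.Adj w y' := by rw [hy'] at he'; exact he'
      obtain ⟨z, hz⟩ := Finset.card_eq_one.mp hwdeg
      have h1' : y = z := by
        have := SimpleGraph.mem_neighborFinset G w y |>.mpr hadjy
        rw [hz] at this; simpa using this
      have h2' : y' = z := by
        have := SimpleGraph.mem_neighborFinset G w y' |>.mpr hadjy'
        rw [hz] at this; simpa using this
      rw [hy, hy', h1', h2']
  -- sum of degrees
  have hsum : F1.card + 2 * F2.card = 2 * G.edgeFinset.card := by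
    rw [← SimpleGraph.sum_degrees_eq_twice_card_edges]
    have hdisj : Disjoint F1 F2 := by
      rw [Finset.disjoint_filter]
      intro v _ hv1
      omega
    calc F1.card + 2 * F2.card = ∑ v ∈ F1, G.degree v + ∑ v ∈ F2, G.degree v := by
          rw [Finset.sum_congr rfl (fun v hv => (Finset.mem_filter.mp hv).2),
            Finset.sum_congr rfl (fun v hv => (Finset.mem_filter.mp hv).2 : ∀ v ∈ F2, G.degree v = 2)]
          simp [mul_comm, hF1]
      _ = ∑ v ∈ F1 ∪ F2, G.degree v := (Finset.sum_union hdisj).symm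
      _ = ∑ v, G.degree v := by
          refine Finset.sum_subset (Finset.subset_univ _) (fun x _ hx => ?_)
          simp only [Finset.mem_union, Finset.mem_filter, Finset.mem_univ, true_and, hF1, hF2,
            not_or] at hx
          have := hdeg2 x
          omega
  have hcard : F1.card + F2.card ≤ n := by
    have := Finset.card_le_card (Finset.subset_univ (F1 ∪ F2))
    rw [Finset.card_union_of_disjoint] at this
    · simpa using this
    · rw [Finset.disjoint_filter]; intro v _ hv1; omega
  omega

lemma partition_card_sum {n k : ℕ} (P : Fin k → SimpleGraph (Fin n))
    [inst : ∀ i, DecidableRel (P i).Adj]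
    (hcov : ∀ e ∈ (⊤ : SimpleGraph (Fin n)).edgeSet, ∃! i, e ∈ (P i).edgeSet) :
    ∑ i, (P i).edgeFinset.card = (⊤ : SimpleGraph (Fin n)).edgeFinset.card := by
  classical
  have hsub : ∀ i, (P i).edgeFinset ⊆ (⊤ : SimpleGraph (Fin n)).edgeFinset :=
    fun i => SimpleGraph.edgeFinset_mono le_top
  have hfil : ∀ i, (P i).edgeFinset =
      (⊤ : SimpleGraph (Fin n)).edgeFinset.filter (· ∈ (P i).edgeFinset) := by
    intro i
    ext e
    simp only [Finset.mem_filter]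
    exact ⟨fun he => ⟨hsub i he, he⟩, fun he => he.2⟩
  calc ∑ i, (P i).edgeFinset.card
      = ∑ i, ∑ e ∈ (⊤ : SimpleGraph (Fin n)).edgeFinset,
          (if e ∈ (P i).edgeFinset then 1 else 0) := by
        refine Finset.sum_congr rfl (fun i _ => ?_)
        conv_lhs => rw [hfil i]
        rw [Finset.card_filter]
    _ = ∑ e ∈ (⊤ : SimpleGraph (Fin n)).edgeFinset, ∑ i : Fin k,
          (if e ∈ (P i).edgeFinset then 1 else 0) := Finset.sum_comm
    _ = ∑ e ∈ (⊤ : SimpleGraph (Fin n)).edgeFinset, 1 := by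
        refine Finset.sum_congr rfl (fun e he => ?_)
        rw [SimpleGraph.mem_edgeFinset] at he
        obtain ⟨i0, hi0, huniq⟩ := hcov e he
        rw [← Finset.card_filter, Finset.card_eq_one]
        refine ⟨i0, ?_⟩
        ext j
        simp only [Finset.mem_filter, Finset.mem_univ, true_and, Finset.mem_singleton,
          SimpleGraph.mem_edgeFinset]
        exact ⟨fun hj => huniq j hj, fun hj => hj ▸ hi0⟩
    _ = (⊤ : SimpleGraph (Fin n)).edgeFinset.card := by rw [Finset.card_eq_sum_ones]

lemma lower_mem {n k : ℕ} (P : Fin k → SimpleGraph (Fin n))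
    (hbp : IsBipartitePartition n k P)
    (havd : ∀ i, Avoids (P i) pathP4 ∧ Avoids (P i) cycleC4 ∧ Avoids (P i) starS4) :
    3 * Nat.choose n 2 ≤ k * (2 * n) := by
  classical
  obtain ⟨hcol, hcov⟩ := hbp
  haveI : ∀ i, DecidableRel (P i).Adj := fun i => Classical.decRel _
  have horch : ∀ i, Orchard (P i) := fun i =>
    avoids_orchard (hcol i) (havd i).1 (havd i).2.1 (havd i).2.2
  calc 3 * Nat.choose n 2
      = 3 * (⊤ : SimpleGraph (Fin n)).edgeFinset.card := by
        rw [SimpleGraph.card_edgeFinset_top_eq_card_choose_two, Fintype.card_fin]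
    _ = 3 * ∑ i, (P i).edgeFinset.card := by rw [partition_card_sum P hcov]
    _ = ∑ i, 3 * (P i).edgeFinset.card := Finset.mul_sum _ _ _
    _ ≤ ∑ _i : Fin k, 2 * n := Finset.sum_le_sum (fun i _ => orchard_count (P i) (horch i))
    _ = k * (2 * n) := by simp [Finset.sum_const]

lemma orchard_comap {V W : Type} {G : SimpleGraph W} (f : V → W) (hf : Function.Injective f)
    (h : Orchard G) : Orchard (G.comap f) := by
  obtain ⟨h1, h2⟩ := h
  constructor
  · intro v a b c hva hvb hvc
    rcases h1 (f v) (f a) (f b) (f c) hva hvb hvc with h|h|h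
    · exact Or.inl (hf h)
    · exact Or.inr (Or.inl (hf h))
    · exact Or.inr (Or.inr (hf h))
  · intro u v huv
    rcases h2 (f u) (f v) huv with h|h
    · exact Or.inl (fun a ha => hf (h (f a) ha))
    · exact Or.inr (fun a ha => hf (h (f a) ha))

lemma mem_of {n : ℕ} {ι : Type} [Fintype ι] {V : Type} (f : Fin n → V)
    (hf : Function.Injective f) (C : ι → SimpleGraph V)
    (hcol : ∀ i, (C i).Colorable 2) (horch : ∀ i, Orchard (C i))
    (hcov : ∀ u v : V, u ≠ v → ∃! i, (C i).Adj u v) :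
    Fintype.card ι ∈ {k | ∃ P : Fin k → SimpleGraph (Fin n),
      IsBipartitePartition n k P ∧
      ∀ i, Avoids (P i) pathP4 ∧ Avoids (P i) cycleC4 ∧ Avoids (P i) starS4} := by
  set e := Fintype.equivFin ι with he
  refine ⟨fun i => (C (e.symm i)).comap f, ⟨fun i => ?_, ?_⟩, fun i => ?_⟩
  · obtain ⟨col⟩ := hcol (e.symm i)
    exact ⟨SimpleGraph.Coloring.mk (fun v => col (f v)) (fun hadj => col.valid hadj)⟩
  · intro ed hed
    induction ed with
    | _ u v =>
      rw [SimpleGraph.mem_edgeSet, SimpleGraph.top_adj] at hed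
      obtain ⟨i, hi, hiu⟩ := hcov (f u) (f v) (fun h => hed (hf h))
      refine ⟨e i, ?_, ?_⟩
      · show s(u,v) ∈ (SimpleGraph.comap f (C (e.symm (e i)))).edgeSet
        rw [SimpleGraph.mem_edgeSet, Equiv.symm_apply_apply]
        exact hi
      · intro j hj
        rw [SimpleGraph.mem_edgeSet] at hj
        have hji : e.symm j = i := hiu (e.symm j) hj
        have := congrArg e hji
        simpa using this
  · have horc : Orchard ((C (e.symm i)).comap f) := orchard_comap f hf (horch (e.symm i))
    exact orchard_avoids horc

lemma chi_le_of {n : ℕ} {ι : Type} [Fintype ι] {V : Type} (f : Fin n → V)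
    (hf : Function.Injective f) (C : ι → SimpleGraph V)
    (hcol : ∀ i, (C i).Colorable 2) (horch : ∀ i, Orchard (C i))
    (hcov : ∀ u v : V, u ≠ v → ∃! i, (C i).Adj u v) :
    chiCherryOrchard n ≤ Fintype.card ι :=
  Nat.sInf_le (mem_of f hf C hcol horch hcov)

def singleEdgeGraph {n : ℕ} (a b : Fin n) : SimpleGraph (Fin n) where
  Adj x y := a < b ∧ ((x = a ∧ y = b) ∨ (x = b ∧ y = a))
  symm := ⟨by rintro x y ⟨h1, h2⟩; exact ⟨h1, by tauto⟩⟩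
  loopless := ⟨by rintro x ⟨h1, (⟨rfl, rfl⟩ | ⟨rfl, rfl⟩)⟩ <;> simp_all⟩

lemma singleEdge_uniq {n : ℕ} {a b : Fin n} {x y z : Fin n}
    (h1 : (singleEdgeGraph a b).Adj x y) (h2 : (singleEdgeGraph a b).Adj x z) : y = z := by
  obtain ⟨hab, hc1⟩ := h1
  obtain ⟨-, hc2⟩ := h2
  rcases hc1 with ⟨rfl, rfl⟩ | ⟨rfl, rfl⟩ <;> rcases hc2 with ⟨h3, rfl⟩ | ⟨h3, rfl⟩ <;> simp_all

lemma singleEdge_col {n : ℕ} (a b : Fin n) : (singleEdgeGraph a b).Colorable 2 := by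
  refine ⟨SimpleGraph.Coloring.mk (fun x => if x = a then 0 else 1) ?_⟩
  rintro x y ⟨hab, (⟨rfl, rfl⟩ | ⟨rfl, rfl⟩)⟩
  · rw [if_pos rfl, if_neg (fun h => absurd hab (by rw [h]; exact lt_irrefl _))]
    decide
  · rw [if_neg (fun h => absurd hab (by rw [h]; exact lt_irrefl _)), if_pos rfl]
    decide

lemma singleEdge_orchard {n : ℕ} (a b : Fin n) : Orchard (singleEdgeGraph a b) := by
  constructor
  · intro v x y z h1 h2 _
    exact Or.inl (singleEdge_uniq h1 h2)
  · intro u v huv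
    exact Or.inl (fun x hx => singleEdge_uniq hx huv)

lemma chi_triv (n : ℕ) : (n * n) ∈ {k | ∃ P : Fin k → SimpleGraph (Fin n),
      IsBipartitePartition n k P ∧
      ∀ i, Avoids (P i) pathP4 ∧ Avoids (P i) cycleC4 ∧ Avoids (P i) starS4} := by
  have := mem_of (n := n) (ι := Fin n × Fin n) id Function.injective_id
    (fun p => singleEdgeGraph p.1 p.2)
    (fun p => singleEdge_col p.1 p.2) (fun p => singleEdge_orchard p.1 p.2) ?_
  · simpa using this
  · intro u v huv
    rcases lt_or_gt_of_ne huv with h | h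
    · refine ⟨(u, v), ⟨h, Or.inl ⟨rfl, rfl⟩⟩, ?_⟩
      rintro ⟨a, b⟩ ⟨hab, (⟨rfl, rfl⟩ | ⟨h3, h4⟩)⟩
      · rfl
      · rw [← h3, ← h4] at hab; exact absurd hab (lt_asymm h)
    · refine ⟨(v, u), ⟨h, Or.inr ⟨rfl, rfl⟩⟩, ?_⟩
      rintro ⟨a, b⟩ ⟨hab, (⟨h3, h4⟩ | ⟨rfl, rfl⟩)⟩
      · rw [← h3, ← h4] at hab; exact absurd hab (lt_asymm h)
      · rfl

lemma chi_lower (n : ℕ) : 3 * Nat.choose n 2 ≤ chiCherryOrchard n * (2 * n) := by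
  obtain ⟨P, hbp, havd⟩ := Nat.sInf_mem (Set.nonempty_of_mem (chi_triv n))
  exact lower_mem P hbp havd

/-! ## The recursive construction -/

lemma z3a : ∀ x : ZMod 3, x + 2 + 1 = x := by decide
lemma z3b : ∀ x : ZMod 3, ¬ x = x + 1 := by decide
lemma z3c : ∀ x : ZMod 3, ¬ x = x + 2 := by decide
lemma z3d : ∀ x : ZMod 3, ¬ x + 1 = x + 2 := by decide
lemma z3e : ∀ x y : ZMod 3, x ≠ y → y = x + 1 ∨ x = y + 1 := by decide
lemma z3f : ∀ x : ZMod 3, x + 1 + 2 = x := by decide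
lemma z3g : ∀ x y : ZMod 3, x = y + 2 → y = x + 1 := by decide
lemma z3h : ∀ x : ZMod 3, ¬ x = x + 1 + 1 := by decide

abbrev VV (M : ℕ) := ZMod 3 × ZMod (M+1)

def inM (M : ℕ) (p : ZMod 3) (d : ℕ) (u v : VV M) : Prop :=
  (u.1 = p ∧ v.1 = p + 1 ∧ v.2 = u.2 + (d : ZMod (M+1))) ∨
  (v.1 = p ∧ u.1 = p + 1 ∧ u.2 = v.2 + (d : ZMod (M+1)))

lemma inM_cases {M : ℕ} {p : ZMod 3} {d : ℕ} {u v : VV M} (h : inM M p d u v) :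
    (u.1 = p ∧ v.1 = p + 1 ∧ v.2 = u.2 + (d : ZMod (M+1))) ∨
    (u.1 = p + 1 ∧ v.1 = p ∧ v.2 = u.2 - (d : ZMod (M+1))) := by
  rcases h with ⟨h1, h2, h3⟩ | ⟨h1, h2, h3⟩
  · exact Or.inl ⟨h1, h2, h3⟩
  · exact Or.inr ⟨h2, h1, by rw [h3]; ring⟩

def crossG (M : ℕ) (c : ZMod 3) (j : ℕ) : SimpleGraph (VV M) where
  Adj u v := inM M c j u v ∨
    ((M+2)/2 + j < M + 1 ∧ inM M (c+2) ((M+2)/2 + j) u v)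
  symm := ⟨by
    rintro u v (h | ⟨hg, h⟩)
    · exact Or.inl (by unfold inM at h ⊢; tauto)
    · exact Or.inr ⟨hg, by unfold inM at h ⊢; tauto⟩⟩
  loopless := ⟨by
    rintro u (h | ⟨hg, h⟩) <;>
      rcases h with ⟨h1, h2, -⟩ | ⟨h1, h2, -⟩ <;>
      rw [h1] at h2 <;> exact z3b _ h2⟩

/-- neighbour characterisation in the cross template -/
lemma cross_nbr {M : ℕ} {c : ZMod 3} {j : ℕ} {u v : VV M}
    (h : (crossG M c j).Adj u v) :
    (u.1 = c ∧ (v = (c+1, u.2 + (j : ZMod (M+1))) ∨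
                v = (c+2, u.2 - (((M+2)/2 + j : ℕ) : ZMod (M+1))))) ∨
    (u.1 = c + 1 ∧ v = (c, u.2 - (j : ZMod (M+1)))) ∨
    (u.1 = c + 2 ∧ v = (c, u.2 + (((M+2)/2 + j : ℕ) : ZMod (M+1)))) := by
  rcases h with h | ⟨-, h⟩
  · rcases inM_cases h with ⟨h1, h2, h3⟩ | ⟨h1, h2, h3⟩
    · exact Or.inl ⟨h1, Or.inl (Prod.ext h2 h3)⟩
    · exact Or.inr (Or.inl ⟨h1, Prod.ext h2 h3⟩)
  · rcases inM_cases h with ⟨h1, h2, h3⟩ | ⟨h1, h2, h3⟩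
    · refine Or.inr (Or.inr ⟨h1, Prod.ext ?_ h3⟩)
      rw [h2, z3a]
    · rw [z3a] at h1
      exact Or.inl ⟨h1, Or.inr (Prod.ext h2 h3)⟩

lemma cross_parts {M : ℕ} {c : ZMod 3} {j : ℕ} {u v : VV M}
    (h : (crossG M c j).Adj u v) : u.1 ≠ v.1 := by
  rcases cross_nbr h with ⟨h1, (rfl | rfl)⟩ | ⟨h1, rfl⟩ | ⟨h1, rfl⟩ <;>
    rw [h1] <;> simp only [] <;> first
      | exact z3b _
      | exact z3c _
      | exact fun hh => z3b _ hh.symm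
      | exact fun hh => z3c _ hh.symm

lemma cross_orchard (M : ℕ) (c : ZMod 3) (j : ℕ) : Orchard (crossG M c j) := by
  have key : ∀ u v w : VV M, (crossG M c j).Adj u v → (crossG M c j).Adj u w →
      u.1 ≠ c → v = w := by
    intro u v w h1 h2 hu
    rcases cross_nbr h1 with ⟨hc, -⟩ | ⟨hc, rfl⟩ | ⟨hc, rfl⟩ <;>
      [exact absurd hc hu; skip; skip] <;>
    · rcases cross_nbr h2 with ⟨hc', -⟩ | ⟨hc', rfl⟩ | ⟨hc', rfl⟩ <;>
        first
          | rfl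
          | (exfalso; rw [hc] at hc'; first
              | exact z3b _ hc'.symm
              | exact z3c _ hc'.symm
              | exact z3d _ hc'
              | exact z3d _ hc'.symm)
  constructor
  · intro v a b c' h1 h2 h3
    by_cases hv : v.1 = c
    · rcases cross_nbr h1 with ⟨-, ha⟩ | ⟨hc', -⟩ | ⟨hc', -⟩ <;>
        [skip; exact absurd (hv ▸ hc' : c = c + 1) (z3b _); exact absurd (hv ▸ hc' : c = c + 2) (z3c _)]
      rcases cross_nbr h2 with ⟨-, hb⟩ | ⟨hc', -⟩ | ⟨hc', -⟩ <;>
        [skip; exact absurd (hv ▸ hc' : c = c + 1) (z3b _); exact absurd (hv ▸ hc' : c = c + 2) (z3c _)]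
      rcases cross_nbr h3 with ⟨-, hc''⟩ | ⟨hc', -⟩ | ⟨hc', -⟩ <;>
        [skip; exact absurd (hv ▸ hc' : c = c + 1) (z3b _); exact absurd (hv ▸ hc' : c = c + 2) (z3c _)]
      rcases ha with rfl | rfl <;> rcases hb with rfl | rfl <;> rcases hc'' with rfl | rfl <;>
        tauto
    · exact Or.inl (key v a b h1 h2 hv)
  · intro u v huv
    by_cases hu : u.1 = c
    · right
      intro a ha
      have hv : v.1 ≠ c := fun h => cross_parts huv (hu.trans h.symm)
      exact (key v a u ha huv.symm hv).trans rfl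
    · exact Or.inl (fun a ha => key u a v ha huv hu)

lemma cross_colorable (M : ℕ) (c : ZMod 3) (j : ℕ) : (crossG M c j).Colorable 2 := by
  refine ⟨SimpleGraph.Coloring.mk (fun u => if u.1 = c then 0 else 1) ?_⟩
  intro u v huv
  have n1 : ¬ (c + 1 = c) := fun hh => z3b _ hh.symm
  have n2 : ¬ (c + 2 = c) := fun hh => z3c _ hh.symm
  rcases cross_nbr huv with ⟨h1, (rfl | rfl)⟩ | ⟨h1, rfl⟩ | ⟨h1, rfl⟩ <;>
    simp [h1, n1, n2]

def toFinM {M : ℕ} (x : ZMod (M+1)) : Fin (M+1) := ⟨x.val, ZMod.val_lt x⟩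

lemma toFinM_inj {M : ℕ} : Function.Injective (toFinM (M := M)) := by
  intro x y h
  exact ZMod.val_injective _ (congrArg Fin.val h)

def liftG (M : ℕ) (Q : SimpleGraph (Fin (M+1))) : SimpleGraph (VV M) where
  Adj u v := u.1 = v.1 ∧ Q.Adj (toFinM u.2) (toFinM v.2)
  symm := ⟨fun u v ⟨h1, h2⟩ => ⟨h1.symm, h2.symm⟩⟩
  loopless := ⟨fun u ⟨_, h⟩ => Q.irrefl h⟩

lemma liftG_orchard {M : ℕ} {Q : SimpleGraph (Fin (M+1))} (h : Orchard Q) :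
    Orchard (liftG M Q) := by
  obtain ⟨h1, h2⟩ := h
  constructor
  · rintro v a b c ⟨ha1, ha2⟩ ⟨hb1, hb2⟩ ⟨hc1, hc2⟩
    rcases h1 _ _ _ _ ha2 hb2 hc2 with h | h | h
    · exact Or.inl (Prod.ext (ha1.symm.trans hb1) (toFinM_inj h))
    · exact Or.inr (Or.inl (Prod.ext (ha1.symm.trans hc1) (toFinM_inj h)))
    · exact Or.inr (Or.inr (Prod.ext (hb1.symm.trans hc1) (toFinM_inj h)))
  · rintro u v ⟨hp, hq⟩
    rcases h2 _ _ hq with h | h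
    · refine Or.inl ?_
      rintro a ⟨ha1, ha2⟩
      exact Prod.ext (ha1.symm.trans hp) (toFinM_inj (h _ ha2))
    · refine Or.inr ?_
      rintro a ⟨ha1, ha2⟩
      exact Prod.ext (ha1.symm.trans hp.symm) (toFinM_inj (h _ ha2))

lemma liftG_colorable {M : ℕ} {Q : SimpleGraph (Fin (M+1))} (h : Q.Colorable 2) :
    (liftG M Q).Colorable 2 := by
  obtain ⟨col⟩ := h
  exact ⟨SimpleGraph.Coloring.mk (fun u => col (toFinM u.2)) (fun hadj => col.valid hadj.2)⟩

/-- main coverage theorem for the combined family -/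
lemma step_coverage (M k : ℕ) (Q : Fin k → SimpleGraph (Fin (M+1)))
    (hQcov : ∀ x y : Fin (M+1), x ≠ y → ∃! i, (Q i).Adj x y) :
    ∀ u v : VV M, u ≠ v →
      ∃! i : Fin k ⊕ (ZMod 3 × Fin ((M+2)/2)),
        (Sum.elim (fun i => liftG M (Q i)) (fun p => crossG M p.1 p.2.val) i).Adj u v := by
  have hh1 : 1 ≤ (M+2)/2 := by omega
  have hh2 : (M+2)/2 ≤ M + 1 := by omega
  have hh3 : M + 1 ≤ 2 * ((M+2)/2) := by omega
  -- the oriented cross case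
  have key : ∀ u v : VV M, v.1 = u.1 + 1 →
      ∃! i : Fin k ⊕ (ZMod 3 × Fin ((M+2)/2)),
        (Sum.elim (fun i => liftG M (Q i)) (fun p => crossG M p.1 p.2.val) i).Adj u v := by
    intro u v hor
    set δ := (v.2 - u.2).val with hδdef
    have hδlt : δ < M + 1 := ZMod.val_lt _
    have hcast : (δ : ZMod (M+1)) = v.2 - u.2 := ZMod.natCast_rightInverse _
    -- uniqueness helper: any adjacent cross template is determined
    have huniq : ∀ (c : ZMod 3) (j : Fin ((M+2)/2)),
        (crossG M c j.val).Adj u v →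
        (δ < (M+2)/2 ∧ c = u.1 ∧ j.val = δ) ∨
        ((M+2)/2 ≤ δ ∧ c = u.1 + 1 ∧ j.val = δ - (M+2)/2) := by
      intro c j hadj
      have hjlt : j.val < (M+2)/2 := j.isLt
      rcases hadj with hm | ⟨hg, hm⟩
      · rcases hm with ⟨hu1, hv1, hv2⟩ | ⟨hv1, hu1, hu2⟩
        · -- c = u.1, shift j
          have : (j.val : ZMod (M+1)) = v.2 - u.2 := by rw [hv2]; ring
          have hval : j.val = δ := by
            rw [hδdef, ← this, ZMod.val_cast_of_lt (lt_of_lt_of_le hjlt hh2)]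
          exact Or.inl ⟨hval ▸ hjlt, hu1.symm, hval⟩
        · -- wrong orientation
          exfalso
          rw [hv1, hu1] at hor
          exact z3h _ hor
      · rcases hm with ⟨hu1, hv1, hv2⟩ | ⟨hv1, hu1, hu2⟩
        · -- u.1 = c + 2
          have hc : c = u.1 + 1 := z3g _ _ hu1
          have : (((M+2)/2 + j.val : ℕ) : ZMod (M+1)) = v.2 - u.2 := by rw [hv2]; ring
          have hval : (M+2)/2 + j.val = δ := by
            rw [hδdef, ← this, ZMod.val_cast_of_lt hg]
          exact Or.inr ⟨by omega, hc, by omega⟩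
        · -- wrong orientation
          exfalso
          rw [z3a] at hu1
          rw [hv1, hu1] at hor
          exact z3d _ hor.symm
    by_cases hcase : δ < (M+2)/2
    · refine ⟨Sum.inr (u.1, ⟨δ, hcase⟩), ?_, ?_⟩
      · show (crossG M u.1 δ).Adj u v
        exact Or.inl (Or.inl ⟨rfl, hor, by rw [hcast]; ring⟩)
      · rintro (i | ⟨c, j⟩) hadj
        · exfalso
          have h1 : u.1 = v.1 := hadj.1
          rw [hor] at h1
          exact z3b _ h1
        · rcases huniq c j hadj with ⟨-, hc, hj⟩ | ⟨hge, -, -⟩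
          · rw [Sum.inr.injEq, Prod.mk.injEq]
            exact ⟨hc, Fin.ext hj⟩
          · omega
    · refine ⟨Sum.inr (u.1 + 1, ⟨δ - (M+2)/2, by omega⟩), ?_, ?_⟩
      · show (crossG M (u.1 + 1) (δ - (M+2)/2)).Adj u v
        refine Or.inr ⟨by omega, Or.inl ⟨(z3f u.1).symm, ?_, ?_⟩⟩
        · rw [z3a (u.1 + 1)]
          exact hor
        · rw [show (M+2)/2 + (δ - (M+2)/2) = δ from by omega, hcast]
          ring
      · rintro (i | ⟨c, j⟩) hadj
        · exfalso
          have h1 : u.1 = v.1 := hadj.1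
          rw [hor] at h1
          exact z3b _ h1
        · rcases huniq c j hadj with ⟨hlt, -, -⟩ | ⟨-, hc, hj⟩
          · omega
          · rw [Sum.inr.injEq, Prod.mk.injEq]
            exact ⟨hc, Fin.ext hj⟩
  intro u v huv
  by_cases hp : u.1 = v.1
  · have h2ne : u.2 ≠ v.2 := fun h => huv (Prod.ext hp h)
    have hfne : toFinM u.2 ≠ toFinM v.2 := fun h => h2ne (toFinM_inj h)
    obtain ⟨i, hi, hiu⟩ := hQcov _ _ hfne
    refine ⟨Sum.inl i, ⟨hp, hi⟩, ?_⟩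
    rintro (i' | ⟨c, j⟩) hadj
    · rw [Sum.inl.injEq]
      exact hiu i' hadj.2
    · exact absurd hp (cross_parts hadj)
  · rcases z3e _ _ hp with hor | hor
    · exact key u v hor
    · obtain ⟨i, hi, hiu⟩ := key v u hor
      exact ⟨i, hi.symm, fun j hj => hiu j hj.symm⟩

lemma chi_step (M n : ℕ) (hn : n ≤ 3 * (M+1)) :
    chiCherryOrchard n ≤ chiCherryOrchard (M+1) + 3 * ((M+2)/2) := by
  classical
  obtain ⟨Q, ⟨hQcol, hQcov⟩, hQav⟩ := Nat.sInf_mem (Set.nonempty_of_mem (chi_triv (M+1)))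
  have hQcov' : ∀ x y : Fin (M+1), x ≠ y → ∃! i, (Q i).Adj x y := by
    intro x y hxy
    have hmem : s(x, y) ∈ (⊤ : SimpleGraph (Fin (M+1))).edgeSet := by
      rw [SimpleGraph.mem_edgeSet]; exact hxy
    obtain ⟨i, hi, hiu⟩ := hQcov s(x, y) hmem
    rw [SimpleGraph.mem_edgeSet] at hi
    exact ⟨i, hi, fun j hj => hiu j ((SimpleGraph.mem_edgeSet _).mpr hj)⟩
  have hQorch : ∀ i, Orchard (Q i) := fun i =>
    avoids_orchard (hQcol i) (hQav i).1 (hQav i).2.1 (hQav i).2.2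
  set f : Fin n → VV M := fun i => ((↑(i.val / (M+1)) : ZMod 3), (↑i.val : ZMod (M+1))) with hf
  have hfinj : Function.Injective f := by
    intro i j hij
    obtain ⟨h1, h2⟩ := Prod.ext_iff.mp hij
    have l1 : i.val / (M+1) < 3 := (Nat.div_lt_iff_lt_mul (Nat.succ_pos M)).mpr
      (lt_of_lt_of_le i.isLt (by omega))
    have l2 : j.val / (M+1) < 3 := (Nat.div_lt_iff_lt_mul (Nat.succ_pos M)).mpr
      (lt_of_lt_of_le j.isLt (by omega))
    have e1 : i.val / (M+1) = j.val / (M+1) := by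
      have := congrArg ZMod.val h1
      rwa [ZMod.val_cast_of_lt l1, ZMod.val_cast_of_lt l2] at this
    have e2 : i.val % (M+1) = j.val % (M+1) := by
      have := congrArg ZMod.val h2
      rwa [ZMod.val_natCast, ZMod.val_natCast] at this
    have h3 : i.val = j.val := by
      conv_lhs => rw [← Nat.div_add_mod i.val (M+1)]
      conv_rhs => rw [← Nat.div_add_mod j.val (M+1)]
      rw [e1, e2]
    exact Fin.ext h3
  have hle := chi_le_of f hfinj
    (Sum.elim (fun i => liftG M (Q i))
      (fun p : ZMod 3 × Fin ((M+2)/2) => crossG M p.1 p.2.val))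
    (fun i => by
      rcases i with i | ⟨c, j⟩
      · exact liftG_colorable (hQcol i)
      · exact cross_colorable M c j.val)
    (fun i => by
      rcases i with i | ⟨c, j⟩
      · exact liftG_orchard (hQorch i)
      · exact cross_orchard M c j.val)
    (step_coverage M _ Q hQcov')
  calc chiCherryOrchard n ≤ _ := hle
    _ = chiCherryOrchard (M+1) + 3 * ((M+2)/2) := by
      simp [Fintype.card_sum, Fintype.card_prod, Fintype.card_fin, ZMod.card]
      rfl

lemma chi_le_sq (n : ℕ) : chiCherryOrchard n ≤ n * n := Nat.sInf_le (chi_triv n)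

lemma chi_upper : ∀ n : ℕ, (chiCherryOrchard n : ℝ) ≤ 3/4 * n + 169 * Real.log (n + 3) := by
  have hlog3 : (1:ℝ) ≤ Real.log 3 := by
    rw [Real.le_log_iff_exp_le (by norm_num)]
    calc Real.exp 1 ≤ 2.7182818286 := Real.exp_one_lt_d9.le
      _ ≤ 3 := by norm_num
  have hlog2 : (0.6931471803:ℝ) ≤ Real.log 2 := Real.log_two_gt_d9.le
  intro n
  induction n using Nat.strong_induction_on with
  | _ n ih =>
    by_cases hn : n ≤ 13
    · have h0 : chiCherryOrchard n ≤ 169 :=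
        le_trans (chi_le_sq n) (Nat.mul_le_mul hn hn)
      have h1 : (chiCherryOrchard n : ℝ) ≤ 169 := by exact_mod_cast h0
      have h2 : Real.log 3 ≤ Real.log ((n:ℝ) + 3) :=
        Real.log_le_log (by norm_num) (by have := Nat.cast_nonneg (α := ℝ) n; linarith)
      have h3 : (0:ℝ) ≤ (n:ℝ) := Nat.cast_nonneg n
      nlinarith
    · push_neg at hn
      set M := (n+2)/3 - 1 with hMdef
      have hM1 : M + 1 = (n+2)/3 := by omega
      have hn3 : n ≤ 3 * (M+1) := by omega
      have hstep := chi_step M n hn3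
      have hIH := ih (M+1) (by omega)
      have hcast : (chiCherryOrchard n : ℝ) ≤
          (chiCherryOrchard (M+1) : ℝ) + 3 * (((M+2)/2 : ℕ) : ℝ) := by exact_mod_cast hstep
      have hhalf : (((M+2)/2 : ℕ) : ℝ) ≤ ((M:ℝ)+2)/2 := by
        calc (((M+2)/2 : ℕ) : ℝ) ≤ ((M+2 : ℕ) : ℝ)/2 := Nat.cast_div_le
          _ = ((M:ℝ)+2)/2 := by push_cast; ring
      have hm : ((M:ℝ)+1) ≤ ((n:ℝ)+2)/3 := by
        have : (((n+2)/3 : ℕ) : ℝ) ≤ ((n+2 : ℕ) : ℝ)/3 := Nat.cast_div_le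
        rw [← hM1] at this
        push_cast at this
        linarith
      have hIH' : (chiCherryOrchard (M+1) : ℝ) ≤ 3/4 * ((M:ℝ)+1) + 169 * Real.log ((M:ℝ)+4) := by
        have e : ((M+1 : ℕ) : ℝ) + 3 = (M:ℝ) + 4 := by push_cast; ring
        rw [e] at hIH
        push_cast at hIH ⊢
        linarith
      have hlogm : Real.log ((M:ℝ)+4) + Real.log 2 ≤ Real.log ((n:ℝ)+3) := by
        rw [← Real.log_mul (by positivity) (by norm_num)]
        apply Real.log_le_log (by positivity)
        have hn' : (14:ℝ) ≤ (n:ℝ) := by exact_mod_cast hn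
        nlinarith
      linarith

lemma chi_lower_real (n : ℕ) : 3/4 * (n:ℝ) - 3/2 ≤ (chiCherryOrchard n : ℝ) := by
  rcases Nat.eq_zero_or_pos n with rfl | hn
  · have := Nat.cast_nonneg (α := ℝ) (chiCherryOrchard 0)
    simp only [Nat.cast_zero]
    linarith
  · have h := chi_lower n
    rw [Nat.choose_two_right] at h
    have hA : n * (n-1) ≤ 2 * (n * (n-1) / 2) + 1 := by omega
    have hN : 3 * (n * (n-1)) ≤ 4 * (chiCherryOrchard n * n) + 3 := by nlinarith
    have hc : (3:ℝ) * ((n:ℝ) * ((n:ℝ)-1)) ≤ 4 * ((chiCherryOrchard n : ℝ) * (n:ℝ)) + 3 := by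
      have := (Nat.cast_le (α := ℝ)).mpr hN
      push_cast [Nat.cast_sub hn] at this
      convert this using 2 <;> push_cast <;> ring
    have hn1 : (1:ℝ) ≤ (n:ℝ) := by exact_mod_cast hn
    nlinarith [hc, hn1, Nat.cast_nonneg (α := ℝ) (chiCherryOrchard n)]


open Asymptotics Filter in
/-- `χ'_{P₄,C₄,S₄}(n) = (3/4)n + o(n)`. -/
theorem chiCherryOrchard_asymp :
    (fun n : ℕ => (chiCherryOrchard n : ℝ) - 3 / 4 * (n : ℝ)) =o[atTop]
      (fun n : ℕ => (n : ℝ)) := by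
  have hbound : ∀ n : ℕ, |(chiCherryOrchard n : ℝ) - 3/4 * n| ≤ 3/2 + 169 * Real.log (n+3) := by
    intro n
    rw [abs_le]
    have hlogpos : 0 ≤ Real.log ((n:ℝ)+3) :=
      Real.log_nonneg (by have := Nat.cast_nonneg (α := ℝ) n; linarith)
    constructor
    · linarith [chi_lower_real n]
    · linarith [chi_upper n]
  have hconst : (fun _ : ℕ => (3/2 : ℝ)) =o[atTop] (fun n : ℕ => (n:ℝ)) := by
    apply Asymptotics.isLittleO_const_left.mpr
    right
    have : Filter.Tendsto (fun n : ℕ => (n:ℝ)) atTop atTop := tendsto_natCast_atTop_atTop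
    exact tendsto_abs_atTop_atTop.comp this
  have hlog : (fun n : ℕ => Real.log ((n:ℝ)+3)) =o[atTop] (fun n : ℕ => (n:ℝ)) := by
    have h1 : (fun n : ℕ => Real.log ((n:ℝ)+3)) =o[atTop] (fun n : ℕ => (n:ℝ)+3) := by
      have := Real.isLittleO_log_id_atTop
      have htend : Filter.Tendsto (fun n : ℕ => (n:ℝ)+3) atTop atTop :=
        Filter.tendsto_atTop_add_const_right _ _ tendsto_natCast_atTop_atTop
      exact this.comp_tendsto htend
    have h2 : (fun n : ℕ => (n:ℝ)+3) =O[atTop] (fun n : ℕ => (n:ℝ)) := by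
      apply Asymptotics.IsBigO.of_bound 4
      filter_upwards [Filter.eventually_ge_atTop 1] with n hn
      have : (1:ℝ) ≤ (n:ℝ) := by exact_mod_cast hn
      rw [Real.norm_eq_abs, Real.norm_eq_abs, abs_of_nonneg (by linarith), abs_of_nonneg (by linarith)]
      linarith
    exact h1.trans_isBigO h2
  have hsum : (fun n : ℕ => (3/2 : ℝ) + 169 * Real.log ((n:ℝ)+3)) =o[atTop]
      (fun n : ℕ => (n:ℝ)) := hconst.add (hlog.const_mul_left 169)
  refine Asymptotics.IsBigO.trans_isLittleO ?_ hsum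
  apply Asymptotics.isBigO_of_le
  intro n
  rw [Real.norm_eq_abs, Real.norm_eq_abs]
  exact (hbound n).trans (le_abs_self _)
end
end
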